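/- arXiv:2509.20598 — 4 statements merged into one kernel-verified Lean document; each statement's English description precedes it below -/
import Mathlib

section
/- A Borel measurable function φ : [1,∞) → (0,∞) is RO-varying at infinity (i.e., there exist a > 1 and c ≥ 1 with c⁻¹ ≤ φ(λt)/φ(t) ≤ c for all t ≥ 1, λ ∈ [1,a]) if and only if there exist real numbers s₀ ≤ s₁ and a constant c' ≥ 1 such that t^{-s₀} φ(t) ≤ c' τ^{-s₀} φ(τ) and τ^{-s₁} φ(τ) ≤ c' t^{-s₁} φ(t) for all 1 ≤ t ≤ τ. -/
private lemma aux_div (u v A B c : ℝ) (hA : 0 < A) (hB : 0 < B) (h : u * B ≤ c * v * A) :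
    A⁻¹ * u ≤ c * (B⁻¹ * v) := by
  have h2 : u / A ≤ c * v / B := (div_le_div_iff₀ hA hB).mpr h
  calc A⁻¹ * u = u / A := by ring
    _ ≤ c * v / B := h2
    _ = c * (B⁻¹ * v) := by ring

private lemma aux2 (u v P Q c : ℝ) (hP : 0 < P) (hQ : 0 < Q)
    (h : (P * Q)⁻¹ * u ≤ c * (Q⁻¹ * v)) : u ≤ c * P * v := by
  have h2 : u / (P * Q) ≤ c * v / Q := by
    calc u / (P * Q) = (P * Q)⁻¹ * u := by ring
      _ ≤ c * (Q⁻¹ * v) := h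
      _ = c * v / Q := by ring
  have h3 := (div_le_div_iff₀ (by positivity) hQ).mp h2
  have h4 : u * Q ≤ (c * P * v) * Q := by
    calc u * Q ≤ c * v * (P * Q) := h3
      _ = (c * P * v) * Q := by ring
  exact le_of_mul_le_mul_right h4 hQ

private lemma aux3 (u v P Q c : ℝ) (hP : 0 < P) (hQ : 0 < Q)
    (h : Q⁻¹ * v ≤ c * ((P * Q)⁻¹ * u)) : v ≤ c * P⁻¹ * u := by
  have h2 : v / Q ≤ c * u / (P * Q) := by
    calc v / Q = Q⁻¹ * v := by ring
      _ ≤ c * ((P * Q)⁻¹ * u) := h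
      _ = c * u / (P * Q) := by ring
  have h3 := (div_le_div_iff₀ hQ (by positivity)).mp h2
  -- h3 : v * (P * Q) ≤ c * u * Q
  have h4 : (v * P) * Q ≤ (c * u) * Q := by
    calc (v * P) * Q = v * (P * Q) := by ring
      _ ≤ c * u * Q := h3
  have h5 : v * P ≤ c * u := le_of_mul_le_mul_right h4 hQ
  calc v = (v * P) * P⁻¹ := by field_simp
    _ ≤ (c * u) * P⁻¹ := by
        apply mul_le_mul_of_nonneg_right h5 (by positivity)
    _ = c * P⁻¹ * u := by ring

private lemma key_lemma (φ : ℝ → ℝ) (a c : ℝ) (hc : 1 ≤ c) (ha : 1 ≤ a)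
    (hpos : ∀ t ≥ (1:ℝ), 0 < φ t)
    (h : ∀ t ≥ (1:ℝ), ∀ l ∈ Set.Icc (1:ℝ) a, c⁻¹ ≤ φ (l * t) / φ t ∧ φ (l * t) / φ t ≤ c) :
    ∀ n : ℕ, ∀ t, 1 ≤ t → ∀ τ, t ≤ τ → τ ≤ t * a ^ n →
      φ τ ≤ c ^ n * φ t ∧ φ t ≤ c ^ n * φ τ := by
  have hc0 : 0 < c := lt_of_lt_of_le one_pos hc
  intro n
  induction n with
  | zero =>
    intro t ht τ h1 h2
    simp only [pow_zero, mul_one, one_mul] at h2 ⊢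
    have : τ = t := le_antisymm h2 h1
    simp [this]
  | succ n ih =>
    intro t ht τ h1 h2
    have hτ1 : (1:ℝ) ≤ τ := le_trans ht h1
    have hφt := hpos t ht
    have hφτ := hpos τ hτ1
    have hcn : c ^ n ≤ c ^ (n + 1) := pow_le_pow_right₀ hc (Nat.le_succ n)
    rcases le_or_gt τ (t * a ^ n) with hle | hgt
    · obtain ⟨e1, e2⟩ := ih t ht τ h1 hle
      exact ⟨e1.trans (mul_le_mul_of_nonneg_right hcn hφt.le),
        e2.trans (mul_le_mul_of_nonneg_right hcn hφτ.le)⟩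
    · set t' := t * a ^ n with ht'def
      have han : (1:ℝ) ≤ a ^ n := one_le_pow₀ ha
      have htt' : t ≤ t' := le_mul_of_one_le_right (by linarith) han
      have ht'1 : (1:ℝ) ≤ t' := le_trans ht htt'
      have ht'0 : (0:ℝ) < t' := lt_of_lt_of_le one_pos ht'1
      have hl1 : (1:ℝ) ≤ τ / t' := (one_le_div ht'0).mpr hgt.le
      have hl2 : τ / t' ≤ a := by
        have e : a * t' = t * a ^ (n + 1) := by rw [ht'def]; ring
        rw [div_le_iff₀ ht'0, e]
        exact h2
      obtain ⟨g1, g2⟩ := h t' ht'1 (τ / t') ⟨hl1, hl2⟩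
      rw [div_mul_cancel₀ τ (ne_of_gt ht'0)] at g1 g2
      have hφt' := hpos t' ht'1
      have u1 : φ τ ≤ c * φ t' := (div_le_iff₀ hφt').mp g2
      have u2 : c⁻¹ * φ t' ≤ φ τ := (le_div_iff₀ hφt').mp g1
      have u2' : φ t' ≤ c * φ τ := by
        rw [inv_mul_le_iff₀ hc0] at u2; exact u2
      obtain ⟨e1, e2⟩ := ih t ht t' htt' le_rfl
      constructor
      · calc φ τ ≤ c * φ t' := u1
          _ ≤ c * (c ^ n * φ t) := mul_le_mul_of_nonneg_left e1 hc0.le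
          _ = c ^ (n + 1) * φ t := by ring
      · calc φ t ≤ c ^ n * φ t' := e2
          _ ≤ c ^ n * (c * φ τ) := mul_le_mul_of_nonneg_left u2' (by positivity)
          _ = c ^ (n + 1) * φ τ := by ring

/-- A Borel measurable φ : [1,∞) → (0,∞) is RO-varying at infinity iff there exist
s₀ ≤ s₁ and c' ≥ 1 with t^{-s₀} φ(t) ≤ c' τ^{-s₀} φ(τ) and τ^{-s₁} φ(τ) ≤ c' t^{-s₁} φ(t)
for all 1 ≤ t ≤ τ. -/
theorem stmt1 (φ : ℝ → ℝ)
    (hpos : ∀ t ≥ (1:ℝ), 0 < φ t)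
    (hmeas : Measurable φ) :
    (∃ a > (1:ℝ), ∃ c ≥ (1:ℝ), ∀ t ≥ (1:ℝ), ∀ l ∈ Set.Icc (1:ℝ) a,
      c⁻¹ ≤ φ (l * t) / φ t ∧ φ (l * t) / φ t ≤ c)
    ↔
    (∃ s₀ s₁ : ℝ, s₀ ≤ s₁ ∧ ∃ c' ≥ (1:ℝ), ∀ t τ : ℝ, 1 ≤ t → t ≤ τ →
      t ^ (-s₀) * φ t ≤ c' * (τ ^ (-s₀) * φ τ) ∧
      τ ^ (-s₁) * φ τ ≤ c' * (t ^ (-s₁) * φ t)) := by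
  constructor
  · rintro ⟨a, ha, c, hc, h⟩
    have ha0 : (0:ℝ) < a := lt_trans one_pos ha
    have hc0 : (0:ℝ) < c := lt_of_lt_of_le one_pos hc
    set s₁ := Real.logb a c with hs₁def
    have hs₁0 : 0 ≤ s₁ := Real.logb_nonneg ha hc
    refine ⟨-s₁, s₁, by linarith, c, hc, ?_⟩
    intro t τ ht htτ
    have hτ1 : (1:ℝ) ≤ τ := le_trans ht htτ
    have ht0 : (0:ℝ) < t := lt_of_lt_of_le one_pos ht
    have hτ0 : (0:ℝ) < τ := lt_of_lt_of_le one_pos hτ1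
    set r := τ / t with hrdef
    have hr1 : (1:ℝ) ≤ r := (one_le_div ht0).mpr htτ
    have hr0 : (0:ℝ) < r := lt_of_lt_of_le one_pos hr1
    set x := Real.logb a r with hxdef
    have hx0 : 0 ≤ x := Real.logb_nonneg ha hr1
    set n := ⌊x⌋₊ + 1 with hndef
    have hxn : x < (n : ℝ) := by
      have := Nat.lt_floor_add_one x
      push_cast [hndef]
      exact_mod_cast this
    have hax : a ^ x = r := Real.rpow_logb ha0 (ne_of_gt ha) hr0
    have hrle : r ≤ a ^ n := by
      calc r = a ^ x := hax.symm
        _ ≤ a ^ (n:ℝ) := Real.rpow_le_rpow_of_exponent_le ha.le hxn.le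
        _ = a ^ n := by rw [Real.rpow_natCast]
    have hτle : τ ≤ t * a ^ n := by
      have := (div_le_iff₀ ht0).mp hrle
      linarith [this]
    have hub : (a:ℝ) ^ (n:ℝ) ≤ r * a := by
      have hn_le : (n:ℝ) ≤ x + 1 := by
        have := Nat.floor_le hx0
        push_cast [hndef]
        linarith
      calc (a:ℝ) ^ (n:ℝ) ≤ a ^ (x + 1) := Real.rpow_le_rpow_of_exponent_le ha.le hn_le
        _ = a ^ x * a ^ (1:ℝ) := Real.rpow_add ha0 x 1
        _ = r * a := by rw [hax, Real.rpow_one]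
    have hca : a ^ s₁ = c := Real.rpow_logb ha0 (ne_of_gt ha) hc0
    have hcn : (c:ℝ) ^ n ≤ c * r ^ s₁ := by
      have h1 : (c:ℝ) ^ n = (a ^ (n:ℝ)) ^ s₁ := by
        rw [← hca, ← Real.rpow_natCast (a ^ s₁) n, ← Real.rpow_mul ha0.le,
          mul_comm, Real.rpow_mul ha0.le]
      rw [h1]
      calc (a ^ (n:ℝ)) ^ s₁ ≤ (r * a) ^ s₁ :=
            Real.rpow_le_rpow (Real.rpow_nonneg ha0.le _) hub hs₁0
        _ = r ^ s₁ * a ^ s₁ := Real.mul_rpow hr0.le ha0.le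
        _ = c * r ^ s₁ := by rw [hca]; ring
    obtain ⟨e1, e2⟩ := key_lemma φ a c hc ha.le hpos h n t ht τ htτ hτle
    have hφt := hpos t ht
    have hφτ := hpos τ hτ1
    have hA : (0:ℝ) < τ ^ s₁ := Real.rpow_pos_of_pos hτ0 _
    have hB : (0:ℝ) < t ^ s₁ := Real.rpow_pos_of_pos ht0 _
    have hrs : r ^ s₁ = τ ^ s₁ / t ^ s₁ := Real.div_rpow hτ0.le ht0.le _
    constructor
    · -- t ^ (-(-s₁)) * φ t ≤ c * (τ ^ (-(-s₁)) * φ τ)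
      rw [neg_neg]
      have step : φ t ≤ c * (τ ^ s₁ / t ^ s₁) * φ τ := by
        calc φ t ≤ c ^ n * φ τ := e2
          _ ≤ (c * r ^ s₁) * φ τ := mul_le_mul_of_nonneg_right hcn hφτ.le
          _ = c * (τ ^ s₁ / t ^ s₁) * φ τ := by rw [hrs]
      have := mul_le_mul_of_nonneg_left step hB.le
      calc t ^ s₁ * φ t ≤ t ^ s₁ * (c * (τ ^ s₁ / t ^ s₁) * φ τ) := this
        _ = c * (τ ^ s₁ * φ τ) := by field_simp
    · rw [Real.rpow_neg hτ0.le, Real.rpow_neg ht0.le]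
      apply aux_div _ _ _ _ _ hA hB
      have step : φ τ ≤ c * (τ ^ s₁ / t ^ s₁) * φ t := by
        calc φ τ ≤ c ^ n * φ t := e1
          _ ≤ (c * r ^ s₁) * φ t := mul_le_mul_of_nonneg_right hcn hφt.le
          _ = c * (τ ^ s₁ / t ^ s₁) * φ t := by rw [hrs]
      have := mul_le_mul_of_nonneg_right step hB.le
      calc φ τ * t ^ s₁ ≤ (c * (τ ^ s₁ / t ^ s₁) * φ t) * t ^ s₁ := this
        _ = c * φ t * τ ^ s₁ := by field_simp
  · rintro ⟨s₀, s₁, hs, c', hc', h⟩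
    have hc'0 : (0:ℝ) < c' := lt_of_lt_of_le one_pos hc'
    set M := |s₀| + |s₁| with hMdef
    have hM0 : 0 ≤ M := by positivity
    have h2M : (1:ℝ) ≤ 2 ^ M := Real.one_le_rpow one_le_two hM0
    have h2M0 : (0:ℝ) < 2 ^ M := Real.rpow_pos_of_pos two_pos _
    set c := c' * 2 ^ M with hcdef
    have hc1 : (1:ℝ) ≤ c := one_le_mul_of_one_le_of_one_le hc' h2M
    have hc0 : (0:ℝ) < c := lt_of_lt_of_le one_pos hc1
    refine ⟨2, one_lt_two, c, hc1, ?_⟩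
    intro t ht l hl
    obtain ⟨hl1, hl2⟩ := hl
    have hl0 : (0:ℝ) < l := lt_of_lt_of_le one_pos hl1
    have ht0 : (0:ℝ) < t := lt_of_lt_of_le one_pos ht
    have hlt : t ≤ l * t := le_mul_of_one_le_left ht0.le hl1
    have hlt1 : (1:ℝ) ≤ l * t := le_trans ht hlt
    obtain ⟨H1, H2⟩ := h t (l * t) ht hlt
    have hφt := hpos t ht
    have hφlt := hpos (l * t) hlt1
    -- base-l bound
    have hb : ∀ s : ℝ, s ≤ M → l ^ s ≤ 2 ^ M := by
      intro s hsM
      calc l ^ s ≤ l ^ M := Real.rpow_le_rpow_of_exponent_le hl1 hsM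
        _ ≤ 2 ^ M := Real.rpow_le_rpow hl0.le hl2 hM0
    -- upper bound: φ(lt) ≤ c' * l^s₁ * φ t
    have key2 : φ (l * t) ≤ c' * l ^ s₁ * φ t := by
      have P : (0:ℝ) < l ^ s₁ := Real.rpow_pos_of_pos hl0 _
      have Q : (0:ℝ) < t ^ s₁ := Real.rpow_pos_of_pos ht0 _
      apply aux2 _ _ _ _ _ P Q
      have e1 : (l * t) ^ (-s₁) = (l ^ s₁ * t ^ s₁)⁻¹ := by
        rw [Real.rpow_neg (by positivity), Real.mul_rpow hl0.le ht0.le]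
      have e2 : t ^ (-s₁) = (t ^ s₁)⁻¹ := Real.rpow_neg ht0.le _
      rw [e1, e2] at H2
      exact H2
    -- lower bound: φ t ≤ c' * (l^s₀)⁻¹ * φ(lt)
    have key1 : φ t ≤ c' * (l ^ s₀)⁻¹ * φ (l * t) := by
      have P : (0:ℝ) < l ^ s₀ := Real.rpow_pos_of_pos hl0 _
      have Q : (0:ℝ) < t ^ s₀ := Real.rpow_pos_of_pos ht0 _
      apply aux3 _ _ _ _ _ P Q
      have e1 : (l * t) ^ (-s₀) = (l ^ s₀ * t ^ s₀)⁻¹ := by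
        rw [Real.rpow_neg (by positivity), Real.mul_rpow hl0.le ht0.le]
      have e2 : t ^ (-s₀) = (t ^ s₀)⁻¹ := Real.rpow_neg ht0.le _
      rw [e1, e2] at H1
      exact H1
    have hinv : (l ^ s₀)⁻¹ = l ^ (-s₀) := (Real.rpow_neg hl0.le _).symm
    have hub1 : l ^ s₁ ≤ 2 ^ M := hb s₁ (by rw [hMdef]; nlinarith [le_abs_self s₁, abs_nonneg s₀])
    have hub2 : l ^ (-s₀) ≤ 2 ^ M := hb (-s₀) (by rw [hMdef]; nlinarith [neg_abs_le s₀, abs_nonneg s₁])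
    constructor
    · -- c⁻¹ ≤ φ (l*t) / φ t
      have : φ t ≤ c * φ (l * t) := by
        calc φ t ≤ c' * (l ^ s₀)⁻¹ * φ (l * t) := key1
          _ ≤ c' * 2 ^ M * φ (l * t) := by
              apply mul_le_mul_of_nonneg_right _ hφlt.le
              rw [hinv]
              exact mul_le_mul_of_nonneg_left hub2 hc'0.le
          _ = c * φ (l * t) := by rw [hcdef]
      rw [le_div_iff₀ hφt]
      rw [inv_mul_le_iff₀ hc0]
      linarith
    · have : φ (l * t) ≤ c * φ t := by
        calc φ (l * t) ≤ c' * l ^ s₁ * φ t := key2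
          _ ≤ c' * 2 ^ M * φ t := by
              apply mul_le_mul_of_nonneg_right _ hφt.le
              exact mul_le_mul_of_nonneg_left hub1 hc'0.le
          _ = c * φ t := by rw [hcdef]
      rw [div_le_iff₀ hφt]
      exact this
end

section
/- Let φ be RO-varying at infinity such that ∫₁^∞ t^{n-1}/φ(t)² dt < ∞. Then every u ∈ H^φ(ℝⁿ) satisfies ‖u‖_{L^∞} ≤ C ‖u‖_{H^φ} for a constant C independent of u, so H^φ(ℝⁿ) embeds continuously into the bounded continuous functions. -/
open MeasureTheory
open scoped ENNReal NNReal

/-- The "Japanese bracket" ⟨ξ⟩ = (1 + |ξ|²)^{1/2}. -/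
noncomputable def jb {n : ℕ} (ξ : EuclideanSpace ℝ (Fin n)) : ℝ :=
  Real.sqrt (1 + ‖ξ‖ ^ 2)

open Set Metric Module in
/-- Polar-coordinates formula for the lower integral of a radial function. -/
lemma lintegral_fun_norm_addHaar' {E : Type*} [NormedAddCommGroup E] [NormedSpace ℝ E]
    [MeasurableSpace E] [BorelSpace E] [Nontrivial E] [FiniteDimensional ℝ E]
    (μ : Measure E) [μ.IsAddHaarMeasure] (f : ℝ → ℝ≥0∞) (hf : Measurable f) :
    ∫⁻ x, f ‖x‖ ∂μ = μ.toSphere univ *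
      ∫⁻ y in Ioi (0:ℝ), ENNReal.ofReal (y ^ (finrank ℝ E - 1)) * f y := by
  have h1 : ∫⁻ x : ({(0:E)}ᶜ : Set E), f ‖x.1‖ ∂(μ.comap (↑)) = ∫⁻ x, f ‖x‖ ∂μ := by
    rw [lintegral_subtype_comap (measurableSet_singleton (0:E)).compl (fun a => f ‖a‖),
      restrict_compl_singleton]
  rw [← h1]
  have hmp := μ.measurePreserving_homeomorphUnitSphereProd
  have hfm : Measurable fun p : sphere (0:E) 1 × Ioi (0:ℝ) => f p.2 :=
    hf.comp (measurable_subtype_coe.comp measurable_snd)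
  have h2 : ∫⁻ x : ({(0:E)}ᶜ : Set E), f ‖x.1‖ ∂(μ.comap (↑)) =
      ∫⁻ p : sphere (0:E) 1 × Ioi (0:ℝ), f p.2
        ∂(μ.toSphere.prod (.volumeIoiPow (finrank ℝ E - 1))) := by
    rw [← hmp.map_eq, lintegral_map hfm (homeomorphUnitSphereProd E).measurable]
    exact lintegral_congr fun x => by simp
  rw [h2, lintegral_prod _ hfm.aemeasurable]
  have hdm : Measurable fun r : (Ioi (0:ℝ)) =>
      ENNReal.ofReal ((r : ℝ) ^ (finrank ℝ E - 1)) :=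
    ENNReal.measurable_ofReal.comp (measurable_subtype_coe.pow_const _)
  have hfm' : Measurable fun r : (Ioi (0:ℝ)) => f (r : ℝ) :=
    hf.comp measurable_subtype_coe
  have h3 : (∫⁻ y : Ioi (0:ℝ), f y ∂(Measure.volumeIoiPow (finrank ℝ E - 1))) =
      ∫⁻ y in Ioi (0:ℝ), ENNReal.ofReal (y ^ (finrank ℝ E - 1)) * f y := by
    rw [Measure.volumeIoiPow, lintegral_withDensity_eq_lintegral_mul _ hdm hfm']
    exact lintegral_subtype_comap measurableSet_Ioi
      (fun y => ENNReal.ofReal (y ^ (finrank ℝ E - 1)) * f y)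
  rw [lintegral_congr fun x : sphere (0:E) 1 => h3, lintegral_const]
  ring

/-- Iterated RO-variation lower bound. -/
lemma ro_lower (φ : ℝ → ℝ) (hpos : ∀ t ≥ (1:ℝ), 0 < φ t)
    (hRO : ∃ a > (1:ℝ), ∃ c ≥ (1:ℝ), ∀ t ≥ (1:ℝ), ∀ l ∈ Set.Icc (1:ℝ) a,
      c⁻¹ ≤ φ (l * t) / φ t ∧ φ (l * t) / φ t ≤ c) :
    ∃ K ≥ (1:ℝ), ∀ t ≥ (1:ℝ), ∀ l ∈ Set.Icc (1:ℝ) (Real.sqrt 2),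
      K⁻¹ * φ t ≤ φ (l * t) := by
  obtain ⟨a, ha, c, hc, h⟩ := hRO
  obtain ⟨k, hk⟩ : ∃ k : ℕ, Real.sqrt 2 ≤ a ^ k := by
    obtain ⟨k, hk⟩ := pow_unbounded_of_one_lt (Real.sqrt 2) ha
    exact ⟨k, hk.le⟩
  have key : ∀ k : ℕ, ∀ t ≥ (1:ℝ), ∀ l, 1 ≤ l → l ≤ a ^ k →
      (c ^ k)⁻¹ * φ t ≤ φ (l * t) := by
    intro k
    induction k with
    | zero =>
      intro t ht l hl1 hla
      have : l = 1 := le_antisymm (by simpa using hla) hl1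
      simp [this]
    | succ k ih =>
      intro t ht l hl1 hla
      have hc0 : (0:ℝ) < c := lt_of_lt_of_le one_pos hc
      have hφt : 0 < φ t := hpos t ht
      rcases le_or_gt l a with hla' | hla'
      · have h1 := (h t ht l ⟨hl1, hla'⟩).1
        have hlt : 0 < φ (l * t) := hpos _ (one_le_mul_of_one_le_of_one_le hl1 ht)
        have hthis : c⁻¹ * φ t ≤ φ (l * t) := (le_div_iff₀ hφt).mp h1
        refine le_trans ?_ hthis
        have : c⁻¹ ≤ 1 := inv_le_one_of_one_le₀ hc
        have h2 : (c ^ (k+1) : ℝ)⁻¹ ≤ c⁻¹ := by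
          apply inv_anti₀ hc0
          calc c = c * 1 := by ring
            _ ≤ c * c ^ k := by
                exact mul_le_mul_of_nonneg_left (one_le_pow₀ hc) hc0.le
            _ = c ^ (k+1) := by ring
        exact mul_le_mul_of_nonneg_right h2 hφt.le
      · set l' := l / a with hl'
        have ha0 : (0:ℝ) < a := lt_trans one_pos ha
        have hl'1 : 1 ≤ l' := (one_le_div ha0).mpr hla'.le
        have hl'a : l' ≤ a ^ k := by
          rw [hl', div_le_iff₀ ha0]
          calc l ≤ a ^ (k+1) := hla
            _ = a ^ k * a := by ring
        have hl't : 1 ≤ l' * t := one_le_mul_of_one_le_of_one_le hl'1 ht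
        have h1 := (h (l' * t) hl't a ⟨ha.le, le_refl a⟩).1
        have hφl't : 0 < φ (l' * t) := hpos _ hl't
        have hφal't : 0 < φ (a * (l' * t)) :=
          hpos _ (one_le_mul_of_one_le_of_one_le ha.le hl't)
        have step : c⁻¹ * φ (l' * t) ≤ φ (a * (l' * t)) := (le_div_iff₀ hφl't).mp h1
        have ihs := ih t ht l' hl'1 hl'a
        have heq : a * (l' * t) = l * t := by
          rw [hl', ← mul_assoc, mul_comm a (l / a), div_mul_cancel₀ _ (ne_of_gt ha0)]
        rw [heq] at step
        calc (c ^ (k+1) : ℝ)⁻¹ * φ t = c⁻¹ * ((c ^ k)⁻¹ * φ t) := by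
              rw [pow_succ, mul_inv]; ring
          _ ≤ c⁻¹ * φ (l' * t) := by
              exact mul_le_mul_of_nonneg_left ihs (inv_nonneg.mpr hc0.le)
          _ ≤ φ (l * t) := step
  refine ⟨c ^ k, one_le_pow₀ hc, fun t ht l hl => key k t ht l hl.1 (hl.2.trans hk)⟩

/-- If φ is RO-varying at infinity and ∫₁^∞ t^{n-1}/φ(t)² dt < ∞, then every u ∈ H^φ(ℝⁿ)
satisfies ‖u‖_∞ ≤ C ‖u‖_{H^φ}: stated via the Fourier inversion formula, with v = û. -/
theorem stmt12 (n : ℕ) (φ : ℝ → ℝ)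
    (hpos : ∀ t ≥ (1:ℝ), 0 < φ t)
    (hmeas : Measurable φ)
    (hRO : ∃ a > (1:ℝ), ∃ c ≥ (1:ℝ), ∀ t ≥ (1:ℝ), ∀ l ∈ Set.Icc (1:ℝ) a,
      c⁻¹ ≤ φ (l * t) / φ t ∧ φ (l * t) / φ t ≤ c)
    (hint : ∫⁻ t in Set.Ioi (1:ℝ),
        ENNReal.ofReal (t ^ ((n:ℝ) - 1) / (φ t) ^ 2) < ⊤) :
    ∃ C > (0:ℝ), ∀ v : EuclideanSpace ℝ (Fin n) → ℂ, Measurable v →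
      (∫⁻ ξ, ENNReal.ofReal ((φ (jb ξ)) ^ 2 * ‖v ξ‖ ^ 2)) < ⊤ →
      ∀ x : EuclideanSpace ℝ (Fin n),
        ‖(2 * Real.pi) ^ (-(n:ℝ)) •
            ∫ ξ, Complex.exp (Complex.I * ((inner ℝ x ξ : ℝ) : ℂ)) • v ξ‖ ≤
          C * Real.sqrt (∫⁻ ξ, ENNReal.ofReal ((φ (jb ξ)) ^ 2 * ‖v ξ‖ ^ 2)).toReal := by
  obtain ⟨K, hK1, hKlow⟩ := ro_lower φ hpos hRO
  have hK0 : (0:ℝ) < K := lt_of_lt_of_le one_pos hK1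
  have hjb1 : ∀ ξ : EuclideanSpace ℝ (Fin n), 1 ≤ jb ξ := by
    intro ξ
    rw [jb, Real.one_le_sqrt]
    exact le_add_of_nonneg_right (by positivity)
  have hφjb : ∀ ξ : EuclideanSpace ℝ (Fin n), 0 < φ (jb ξ) :=
    fun ξ => hpos _ (hjb1 ξ)
  set Φ : ℝ≥0∞ := ∫⁻ ξ : EuclideanSpace ℝ (Fin n),
      ENNReal.ofReal (((φ (jb ξ))⁻¹) ^ 2) with hΦdef
  -- Finiteness of Φ
  have hΦlt : Φ < ⊤ := by
    rcases Nat.eq_zero_or_pos n with hn | hn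
    · -- dimension zero
      subst hn
      have huniv : (volume : Measure (EuclideanSpace ℝ (Fin 0))) Set.univ < ⊤ := by
        have hsub : (Set.univ : Set (EuclideanSpace ℝ (Fin 0))) ⊆
            Metric.closedBall (0 : EuclideanSpace ℝ (Fin 0)) 1 := by
          intro ξ _
          simp [Subsingleton.elim ξ 0]
        exact lt_of_le_of_lt (measure_mono hsub)
          (measure_closedBall_lt_top (x := (0 : EuclideanSpace ℝ (Fin 0))) (r := 1))
      have hb : Φ ≤ ENNReal.ofReal (((φ 1)⁻¹) ^ 2) *
          (volume : Measure (EuclideanSpace ℝ (Fin 0))) Set.univ := by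
        rw [hΦdef]
        refine le_trans (lintegral_mono fun ξ => le_of_eq ?_) (le_of_eq (lintegral_const _))
        have hξ : ξ = 0 := Subsingleton.elim ξ 0
        have : jb ξ = 1 := by simp [hξ, jb]
        rw [this]
      exact lt_of_le_of_lt hb (ENNReal.mul_lt_top ENNReal.ofReal_lt_top huniv)
    · -- positive dimension
      haveI : Nonempty (Fin n) := ⟨⟨0, hn⟩⟩
      haveI : Nontrivial (EuclideanSpace ℝ (Fin n)) :=
        ⟨EuclideanSpace.single ⟨0, hn⟩ (1:ℝ), 0, by
          intro h
          have := congrArg (fun f : EuclideanSpace ℝ (Fin n) => f ⟨0, hn⟩) h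
          simp [EuclideanSpace.single_apply] at this⟩
      set Fφ : ℝ → ℝ≥0∞ :=
        fun r => ENNReal.ofReal (((φ (Real.sqrt (1 + r ^ 2)))⁻¹) ^ 2) with hFφ
      have hFφm : Measurable Fφ := by
        apply ENNReal.measurable_ofReal.comp
        apply Measurable.pow_const
        apply Measurable.inv
        exact hmeas.comp (Real.continuous_sqrt.measurable.comp
          (measurable_const.add (measurable_id.pow_const 2)))
      have hrw : Φ = ∫⁻ ξ : EuclideanSpace ℝ (Fin n), Fφ ‖ξ‖ := rfl
      rw [hrw, lintegral_fun_norm_addHaar' (volume : Measure (EuclideanSpace ℝ (Fin n)))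
        Fφ hFφm, finrank_euclideanSpace_fin]
      refine ENNReal.mul_lt_top (measure_lt_top _ _) ?_
      rw [← Set.Ioc_union_Ioi_eq_Ioi (zero_le_one (α := ℝ)),
        lintegral_union measurableSet_Ioi Set.Ioc_disjoint_Ioi_same]
      refine ENNReal.add_lt_top.mpr ⟨?_, ?_⟩
      · -- over (0, 1]
        have hφ1 : 0 < φ 1 := hpos 1 le_rfl
        have hb1 : ∀ y ∈ Set.Ioc (0:ℝ) 1, ENNReal.ofReal (y ^ (n-1)) * Fφ y ≤
            ENNReal.ofReal ((K * (φ 1)⁻¹) ^ 2) := by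
          intro y hy
          have hs1 : 1 ≤ Real.sqrt (1 + y ^ 2) :=
            Real.one_le_sqrt.mpr (le_add_of_nonneg_right (by positivity))
          have hs2 : Real.sqrt (1 + y ^ 2) ≤ Real.sqrt 2 :=
            Real.sqrt_le_sqrt (by nlinarith [hy.2, hy.1.le])
          have hKl := hKlow 1 le_rfl (Real.sqrt (1 + y ^ 2)) ⟨hs1, hs2⟩
          rw [mul_one] at hKl
          have hφs : 0 < φ (Real.sqrt (1 + y ^ 2)) := hpos _ hs1
          have hKφ : 0 < K⁻¹ * φ 1 := mul_pos (inv_pos.mpr hK0) hφ1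
          have hinv : (φ (Real.sqrt (1 + y ^ 2)))⁻¹ ≤ K * (φ 1)⁻¹ := by
            have := inv_anti₀ hKφ hKl
            rwa [mul_inv, inv_inv] at this
          calc ENNReal.ofReal (y ^ (n-1)) * Fφ y
              ≤ 1 * ENNReal.ofReal ((K * (φ 1)⁻¹) ^ 2) := by
                refine mul_le_mul' ?_ ?_
                · exact ENNReal.ofReal_le_one.mpr (pow_le_one₀ hy.1.le hy.2)
                · exact ENNReal.ofReal_le_ofReal
                    (pow_le_pow_left₀ (inv_nonneg.mpr hφs.le) hinv 2)
            _ = ENNReal.ofReal ((K * (φ 1)⁻¹) ^ 2) := one_mul _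
        refine lt_of_le_of_lt (setLIntegral_mono measurable_const hb1) ?_
        rw [setLIntegral_const]
        exact ENNReal.mul_lt_top ENNReal.ofReal_lt_top measure_Ioc_lt_top
      · -- over (1, ∞)
        have hb2 : ∀ y ∈ Set.Ioi (1:ℝ), ENNReal.ofReal (y ^ (n-1)) * Fφ y ≤
            ENNReal.ofReal (K ^ 2) *
              ENNReal.ofReal (y ^ ((n:ℝ) - 1) / (φ y) ^ 2) := by
          intro y hy
          have hy1 : (1:ℝ) < y := hy
          have hy0 : (0:ℝ) < y := lt_trans one_pos hy1
          have hsy : y ≤ Real.sqrt (1 + y ^ 2) := by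
            rw [show y = Real.sqrt (y ^ 2) by rw [Real.sqrt_sq hy0.le]]
            exact Real.sqrt_le_sqrt (by nlinarith [Real.sq_sqrt hy0.le, Real.sqrt_sq hy0.le])
          have hs2 : Real.sqrt (1 + y ^ 2) ≤ Real.sqrt 2 * y := by
            rw [show Real.sqrt 2 * y = Real.sqrt (2 * y ^ 2) by
              rw [Real.sqrt_mul (by norm_num), Real.sqrt_sq hy0.le]]
            exact Real.sqrt_le_sqrt (by nlinarith)
          have hl1 : 1 ≤ Real.sqrt (1 + y ^ 2) / y := (one_le_div hy0).mpr hsy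
          have hl2 : Real.sqrt (1 + y ^ 2) / y ≤ Real.sqrt 2 :=
            (div_le_iff₀ hy0).mpr hs2
          have hKl := hKlow y hy1.le (Real.sqrt (1 + y ^ 2) / y) ⟨hl1, hl2⟩
          rw [div_mul_cancel₀ _ (ne_of_gt hy0)] at hKl
          have hφy : 0 < φ y := hpos y hy1.le
          have hφs : 0 < φ (Real.sqrt (1 + y ^ 2)) := hpos _ (le_trans hy1.le hsy)
          have hKφ : 0 < K⁻¹ * φ y := mul_pos (inv_pos.mpr hK0) hφy
          have hinv : (φ (Real.sqrt (1 + y ^ 2)))⁻¹ ≤ K * (φ y)⁻¹ := by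
            have := inv_anti₀ hKφ hKl
            rwa [mul_inv, inv_inv] at this
          have hry : y ^ ((n:ℝ) - 1) = y ^ (n - 1 : ℕ) := by
            rw [← Real.rpow_natCast y (n-1)]
            congr 1
            rw [Nat.cast_sub hn, Nat.cast_one]
          have hreal : y ^ (n-1) * ((φ (Real.sqrt (1 + y ^ 2)))⁻¹) ^ 2 ≤
              K ^ 2 * (y ^ ((n:ℝ) - 1) / (φ y) ^ 2) := by
            have h2 : ((φ (Real.sqrt (1 + y ^ 2)))⁻¹) ^ 2 ≤ (K * (φ y)⁻¹) ^ 2 :=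
              pow_le_pow_left₀ (inv_nonneg.mpr hφs.le) hinv 2
            rw [hry, div_eq_mul_inv]
            calc y ^ (n-1) * ((φ (Real.sqrt (1 + y ^ 2)))⁻¹) ^ 2
                ≤ y ^ (n-1) * (K * (φ y)⁻¹) ^ 2 :=
                  mul_le_mul_of_nonneg_left h2 (by positivity)
              _ = K ^ 2 * (y ^ (n-1) * ((φ y) ^ 2)⁻¹) := by
                  rw [mul_pow, inv_pow]; ring
          calc ENNReal.ofReal (y ^ (n-1)) * Fφ y
              = ENNReal.ofReal (y ^ (n-1) * ((φ (Real.sqrt (1 + y ^ 2)))⁻¹) ^ 2) := by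
                rw [ENNReal.ofReal_mul (by positivity)]
            _ ≤ ENNReal.ofReal (K ^ 2 * (y ^ ((n:ℝ) - 1) / (φ y) ^ 2)) :=
                ENNReal.ofReal_le_ofReal hreal
            _ = ENNReal.ofReal (K ^ 2) *
                ENNReal.ofReal (y ^ ((n:ℝ) - 1) / (φ y) ^ 2) := by
                rw [ENNReal.ofReal_mul (by positivity)]
        have hgm : Measurable fun y : ℝ => ENNReal.ofReal (K ^ 2) *
            ENNReal.ofReal (y ^ ((n:ℝ) - 1) / (φ y) ^ 2) := by
          refine measurable_const.mul (ENNReal.measurable_ofReal.comp ?_)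
          refine Measurable.div ?_ (hmeas.pow_const 2)
          have hexp : (0:ℝ) ≤ (n:ℝ) - 1 := by
            have : (1:ℝ) ≤ (n:ℝ) := by exact_mod_cast hn
            linarith
          exact (Real.continuous_rpow_const hexp).measurable
        refine lt_of_le_of_lt (setLIntegral_mono hgm hb2) ?_
        rw [lintegral_const_mul' _ _ ENNReal.ofReal_ne_top]
        exact ENNReal.mul_lt_top ENNReal.ofReal_lt_top hint
  have hπ : (0:ℝ) < (2 * Real.pi) ^ (-(n:ℝ)) :=
    Real.rpow_pos_of_pos (mul_pos two_pos Real.pi_pos) _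
  refine ⟨(2 * Real.pi) ^ (-(n:ℝ)) * Real.sqrt Φ.toReal + 1, by
    have h1 := mul_nonneg hπ.le (Real.sqrt_nonneg Φ.toReal); linarith, ?_⟩
  intro v hv hA x
  set A : ℝ≥0∞ := ∫⁻ ξ, ENNReal.ofReal ((φ (jb ξ)) ^ 2 * ‖v ξ‖ ^ 2) with hAdef
  -- Step 1: norm of the integral bounded by lintegral of ‖v‖.
  have hnormI : ‖∫ ξ, Complex.exp (Complex.I * ((inner ℝ x ξ : ℝ) : ℂ)) • v ξ‖ ≤
      (∫⁻ ξ, ENNReal.ofReal ‖v ξ‖).toReal := by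
    refine le_trans (norm_integral_le_lintegral_norm _) (le_of_eq ?_)
    congr 1
    refine lintegral_congr fun ξ => ?_
    congr 1
    rw [norm_smul]
    have : ‖Complex.exp (Complex.I * ((inner ℝ x ξ : ℝ) : ℂ))‖ = 1 := by
      rw [Complex.norm_exp]
      simp
    rw [this, one_mul]
  -- Step 2: Cauchy–Schwarz.
  have hjbm : Measurable fun ξ : EuclideanSpace ℝ (Fin n) => jb ξ := by
    unfold jb
    exact Real.continuous_sqrt.measurable.comp
      ((measurable_const.add ((measurable_norm).pow_const 2)))
  set F : EuclideanSpace ℝ (Fin n) → ℝ≥0∞ :=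
    fun ξ => ENNReal.ofReal ((φ (jb ξ))⁻¹) with hFdef
  set G : EuclideanSpace ℝ (Fin n) → ℝ≥0∞ :=
    fun ξ => ENNReal.ofReal (φ (jb ξ) * ‖v ξ‖) with hGdef
  have hFm : Measurable F := ENNReal.measurable_ofReal.comp ((hmeas.comp hjbm).inv)
  have hGm : Measurable G :=
    ENNReal.measurable_ofReal.comp ((hmeas.comp hjbm).mul hv.norm)
  have key := ENNReal.lintegral_mul_le_Lp_mul_Lq volume
    (⟨by norm_num, by norm_num, by norm_num⟩ : Real.HolderConjugate 2 2)
    hFm.aemeasurable hGm.aemeasurable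
  have e1 : (∫⁻ ξ, (F * G) ξ) = ∫⁻ ξ, ENNReal.ofReal ‖v ξ‖ := by
    refine lintegral_congr fun ξ => ?_
    simp only [Pi.mul_apply, hFdef, hGdef]
    rw [← ENNReal.ofReal_mul (inv_nonneg.mpr (hφjb ξ).le)]
    exact congrArg _ (inv_mul_cancel_left₀ (ne_of_gt (hφjb ξ)) ‖v ξ‖)
  have e2 : (∫⁻ ξ, F ξ ^ (2:ℝ)) = Φ := by
    refine lintegral_congr fun ξ => ?_
    simp only [hFdef]
    rw [ENNReal.ofReal_rpow_of_nonneg (inv_nonneg.mpr (hφjb ξ).le) (by norm_num)]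
    congr 1
    rw [show ((2:ℝ)) = ((2:ℕ):ℝ) by norm_num, Real.rpow_natCast]
  have e3 : (∫⁻ ξ, G ξ ^ (2:ℝ)) = A := by
    refine lintegral_congr fun ξ => ?_
    simp only [hGdef]
    rw [ENNReal.ofReal_rpow_of_nonneg (mul_nonneg (hφjb ξ).le (norm_nonneg _))
      (by norm_num)]
    congr 1
    rw [show ((2:ℝ)) = ((2:ℕ):ℝ) by norm_num, Real.rpow_natCast]
    ring
  have hCS : (∫⁻ ξ, ENNReal.ofReal ‖v ξ‖) ≤ Φ ^ (1/2 : ℝ) * A ^ (1/2 : ℝ) := by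
    rw [← e1, ← e2, ← e3]
    exact key
  -- Step 3: pass to real numbers.
  have hΦh : Φ ^ (1/2 : ℝ) ≠ ⊤ := ENNReal.rpow_ne_top_of_nonneg (by norm_num) hΦlt.ne
  have hAh : A ^ (1/2 : ℝ) ≠ ⊤ := ENNReal.rpow_ne_top_of_nonneg (by norm_num) hA.ne
  have htr : (∫⁻ ξ, ENNReal.ofReal ‖v ξ‖).toReal ≤
      Real.sqrt Φ.toReal * Real.sqrt A.toReal := by
    have := ENNReal.toReal_mono (ENNReal.mul_ne_top hΦh hAh) hCS
    refine le_trans this (le_of_eq ?_)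
    rw [ENNReal.toReal_mul]
    congr 1
    · rw [← ENNReal.toReal_rpow, Real.sqrt_eq_rpow]
    · rw [← ENNReal.toReal_rpow, Real.sqrt_eq_rpow]
  -- Conclude
  rw [norm_smul, Real.norm_eq_abs, abs_of_pos hπ]
  have h1 : (2 * Real.pi) ^ (-(n:ℝ)) *
      ‖∫ ξ, Complex.exp (Complex.I * ((inner ℝ x ξ : ℝ) : ℂ)) • v ξ‖ ≤
      (2 * Real.pi) ^ (-(n:ℝ)) * (Real.sqrt Φ.toReal * Real.sqrt A.toReal) :=
    mul_le_mul_of_nonneg_left (le_trans hnormI htr) hπ.le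
  refine le_trans h1 ?_
  have hs : 0 ≤ Real.sqrt A.toReal := Real.sqrt_nonneg _
  nlinarith [Real.sqrt_nonneg Φ.toReal]
end

section
/- Let φ be RO-varying at infinity. Then the map u ↦ (u, ·)_{L²} extends to an isometric (up to equivalent norms) isomorphism between H^φ(ℝⁿ) and the anti-dual of H^{1/φ}(ℝⁿ): for every continuous antilinear functional ℓ on H^{1/φ}(ℝⁿ) there exists a unique u ∈ H^φ(ℝⁿ) with ℓ(v) = ∫ û(ξ) \overline{v̂(ξ)} dξ (2π)^{-n} for all v ∈ H^{1/φ}(ℝⁿ), and the norms are comparable. -/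
open MeasureTheory
open scoped ENNReal

/-- The squared H^w-norm on the Fourier side: ∫ w(⟨ξ⟩)² |v(ξ)|² dξ, where v = û. -/
noncomputable def wnormSq (n : ℕ) (w : ℝ → ℝ) (v : EuclideanSpace ℝ (Fin n) → ℂ) : ℝ≥0∞ :=
  ∫⁻ ξ, ENNReal.ofReal ((w (jb ξ)) ^ 2 * ‖v ξ‖ ^ 2)

/-- Membership in H^w(ℝⁿ), on the Fourier side. -/
def memH (n : ℕ) (w : ℝ → ℝ) (v : EuclideanSpace ℝ (Fin n) → ℂ) : Prop :=
  Measurable v ∧ wnormSq n w v < ⊤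

section aux
variable {n : ℕ}

lemma one_le_jb (ξ : EuclideanSpace ℝ (Fin n)) : 1 ≤ jb ξ := by
  have := Real.sqrt_le_sqrt (show (1:ℝ) ≤ 1 + ‖ξ‖^2 by nlinarith [sq_nonneg ‖ξ‖])
  simpa [jb] using this

lemma measurable_jb : Measurable (jb (n := n)) := by
  have : Continuous (jb (n := n)) := by
    unfold jb; fun_prop
  exact this.measurable

lemma nn_ofReal_sq {a : ℝ} (ha : 0 ≤ a) (z : ℂ) :
    ENNReal.ofReal (a^2 * ‖z‖^2) = (‖(a:ℂ) * z‖₊ : ℝ≥0∞)^2 := by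
  rw [← ENNReal.ofReal_coe_nnreal, coe_nnnorm, ← ENNReal.ofReal_pow (norm_nonneg _)]
  congr 1
  rw [norm_mul, Complex.norm_real, Real.norm_eq_abs, abs_of_nonneg ha, mul_pow]

lemma wnormSq_eq (w : ℝ → ℝ) (hw : ∀ t, 1 ≤ t → 0 ≤ w t) (v : EuclideanSpace ℝ (Fin n) → ℂ) :
    wnormSq n w v = ∫⁻ ξ, (‖((w (jb ξ) : ℝ) : ℂ) * v ξ‖₊ : ℝ≥0∞)^2 :=
  lintegral_congr fun ξ => nn_ofReal_sq (hw _ (one_le_jb ξ)) _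

lemma sq_eLpNorm (f : EuclideanSpace ℝ (Fin n) → ℂ) :
    eLpNorm f 2 volume ^ 2 = ∫⁻ ξ, (‖f ξ‖₊ : ℝ≥0∞)^2 := by
  rw [eLpNorm_eq_lintegral_rpow_enorm_toReal two_ne_zero ENNReal.ofNat_ne_top]
  rw [← ENNReal.rpow_natCast _ 2, ← ENNReal.rpow_mul]
  norm_num
  rfl

lemma wnormSq_congr_ae {w : ℝ → ℝ} {v v' : EuclideanSpace ℝ (Fin n) → ℂ}
    (h : v =ᵐ[volume] v') : wnormSq n w v = wnormSq n w v' :=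
  lintegral_congr_ae (h.mono fun ξ hξ => by simp only [hξ])

lemma wnormSq_zero_of_ae {w : ℝ → ℝ} {v : EuclideanSpace ℝ (Fin n) → ℂ}
    (h : v =ᵐ[volume] 0) : wnormSq n w v = 0 := by
  rw [wnormSq_congr_ae h]
  simp [wnormSq]

end aux

section aux2
variable {n : ℕ}

lemma sqrt_toReal_sq (x : ℝ≥0∞) : Real.sqrt ((x^2).toReal) = x.toReal := by
  rw [ENNReal.toReal_pow, Real.sqrt_sq ENNReal.toReal_nonneg]

lemma lt_top_of_sq {x : ℝ≥0∞} (h : x^2 < ⊤) : x < ⊤ := by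
  rw [lt_top_iff_ne_top] at h ⊢
  intro hx; rw [hx] at h; simp at h

lemma memℒp_two {w : ℝ → ℝ} (hwm : Measurable w) (hw : ∀ t, 1 ≤ t → 0 ≤ w t)
    {v : EuclideanSpace ℝ (Fin n) → ℂ} (hv : Measurable v) (hfin : wnormSq n w v < ⊤) :
    MemLp (fun ξ => ((w (jb ξ) : ℝ) : ℂ) * v ξ) 2 volume := by
  refine ⟨((Complex.measurable_ofReal.comp (hwm.comp measurable_jb)).mul hv).aestronglyMeasurable, ?_⟩
  apply lt_top_of_sq
  rw [sq_eLpNorm, ← wnormSq_eq w hw v]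
  exact hfin

lemma real_ineq (W X A B : ℝ) (hX : X ≤ A + B) (hXn : 0 ≤ X) (hA : 0 ≤ A) (hB : 0 ≤ B) :
    W^2 * X^2 ≤ 2 * (W^2 * A^2 + W^2 * B^2) := by
  have h2 : X^2 ≤ (A+B)^2 := pow_le_pow_left₀ hXn hX 2
  have h3 := mul_le_mul_of_nonneg_left h2 (sq_nonneg W)
  have h5 := two_mul_le_add_sq (W*A) (W*B)
  nlinarith [h3, h5]

lemma memH_sub {w : ℝ → ℝ} (hwm : Measurable w) {v₁ v₂ : EuclideanSpace ℝ (Fin n) → ℂ}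
    (h₁ : memH n w v₁) (h₂ : memH n w v₂) : memH n w (fun ξ => v₁ ξ - v₂ ξ) := by
  refine ⟨h₁.1.sub h₂.1, ?_⟩
  have hb : ∀ ξ, ENNReal.ofReal (w (jb ξ)^2 * ‖v₁ ξ - v₂ ξ‖^2) ≤
      2 * (ENNReal.ofReal (w (jb ξ)^2 * ‖v₁ ξ‖^2) + ENNReal.ofReal (w (jb ξ)^2 * ‖v₂ ξ‖^2)) := by
    intro ξ
    rw [← ENNReal.ofReal_add (by positivity) (by positivity),
      ← ENNReal.ofReal_ofNat, ← ENNReal.ofReal_mul (by norm_num)]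
    apply ENNReal.ofReal_le_ofReal
    exact real_ineq _ _ _ _ (norm_sub_le _ _) (norm_nonneg _) (norm_nonneg _) (norm_nonneg _)
  have hm : ∀ (v : EuclideanSpace ℝ (Fin n) → ℂ), Measurable v →
      Measurable fun ξ => ENNReal.ofReal (w (jb ξ)^2 * ‖v ξ‖^2) := by
    intro v hv
    apply ENNReal.measurable_ofReal.comp
    exact (((hwm.comp measurable_jb).pow_const 2).mul (hv.norm.pow_const 2))
  calc wnormSq n w (fun ξ => v₁ ξ - v₂ ξ)
      ≤ ∫⁻ ξ, 2 * (ENNReal.ofReal (w (jb ξ)^2 * ‖v₁ ξ‖^2) +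
          ENNReal.ofReal (w (jb ξ)^2 * ‖v₂ ξ‖^2)) := lintegral_mono hb
    _ = 2 * (wnormSq n w v₁ + wnormSq n w v₂) := by
        rw [lintegral_const_mul (f := fun ξ => ENNReal.ofReal (w (jb ξ)^2 * ‖v₁ ξ‖^2) + ENNReal.ofReal (w (jb ξ)^2 * ‖v₂ ξ‖^2)) _ ((hm v₁ h₁.1).add (hm v₂ h₂.1)),
          lintegral_add_left (hm v₁ h₁.1)]
        rfl
    _ < ⊤ := by
        have := h₁.2; have := h₂.2
        apply ENNReal.mul_lt_top (by norm_num)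
        exact ENNReal.add_lt_top.mpr ⟨h₁.2, h₂.2⟩

end aux2

section aux3
variable {n : ℕ}

lemma ofReal_norm_sq (z : ℂ) : ENNReal.ofReal (‖z‖^2) = (‖z‖₊ : ℝ≥0∞)^2 := by
  rw [← ENNReal.ofReal_coe_nnreal, coe_nnnorm, ← ENNReal.ofReal_pow (norm_nonneg _)]

lemma wnormSq_conj {w : ℝ → ℝ} (p : EuclideanSpace ℝ (Fin n) → ℂ) :
    wnormSq n w (fun ξ => (starRingEnd ℂ) (p ξ)) = wnormSq n w p :=
  lintegral_congr fun ξ => by simp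

lemma integrable_conj_mul {P Q : EuclideanSpace ℝ (Fin n) → ℂ}
    (hP : MemLp P 2 volume) (hQ : MemLp Q 2 volume) :
    Integrable (fun ξ => (starRingEnd ℂ) (P ξ) * Q ξ) volume := by
  have h := L2.integrable_inner (𝕜 := ℂ) (hP.toLp P) (hQ.toLp Q)
  refine h.congr ?_
  filter_upwards [hP.coeFn_toLp, hQ.coeFn_toLp] with ξ h1 h2
  rw [RCLike.inner_apply', h1, h2]

end aux3


set_option maxHeartbeats 2000000 in
/-- Duality: for φ RO-varying, every continuous antilinear functional ℓ on H^{1/φ}(ℝⁿ)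
is represented by a unique u ∈ H^φ(ℝⁿ) via the extended L² pairing
ℓ(v) = (2π)^{-n} ∫ û(ξ) conj(v̂(ξ)) dξ, with comparable norms.  Everything is stated on
the Fourier side, identifying u with û and v with v̂. -/
theorem stmt18 (n : ℕ) (φ : ℝ → ℝ)
    (hpos : ∀ t ≥ (1:ℝ), 0 < φ t)
    (hmeas : Measurable φ)
    (hRO : ∃ a > (1:ℝ), ∃ c ≥ (1:ℝ), ∀ t ≥ (1:ℝ), ∀ l ∈ Set.Icc (1:ℝ) a,
      c⁻¹ ≤ φ (l * t) / φ t ∧ φ (l * t) / φ t ≤ c) :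
    ∃ C > (0:ℝ), ∀ (ℓ : (EuclideanSpace ℝ (Fin n) → ℂ) → ℂ) (M : ℝ),
      (∀ v w, memH n (fun t => (φ t)⁻¹) v → memH n (fun t => (φ t)⁻¹) w →
        ℓ (v + w) = ℓ v + ℓ w) →
      (∀ (c : ℂ) v, memH n (fun t => (φ t)⁻¹) v →
        ℓ (c • v) = (starRingEnd ℂ) c * ℓ v) →
      (∀ v, memH n (fun t => (φ t)⁻¹) v →
        ‖ℓ v‖ ≤ M * Real.sqrt (wnormSq n (fun t => (φ t)⁻¹) v).toReal) →
      ∃ u : EuclideanSpace ℝ (Fin n) → ℂ,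
        memH n φ u ∧
        (∀ v, memH n (fun t => (φ t)⁻¹) v →
          ℓ v = ((((2 * Real.pi) ^ (-(n:ℝ)) : ℝ)) : ℂ) * ∫ ξ, u ξ * (starRingEnd ℂ) (v ξ)) ∧
        Real.sqrt (wnormSq n φ u).toReal ≤ C * M ∧
        (∀ v, memH n (fun t => (φ t)⁻¹) v →
          ‖ℓ v‖ ≤ C * Real.sqrt (wnormSq n φ u).toReal *
            Real.sqrt (wnormSq n (fun t => (φ t)⁻¹) v).toReal) ∧
        (∀ u' : EuclideanSpace ℝ (Fin n) → ℂ, memH n φ u' →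
          (∀ v, memH n (fun t => (φ t)⁻¹) v →
            ℓ v = ((((2 * Real.pi) ^ (-(n:ℝ)) : ℝ)) : ℂ) * ∫ ξ, u' ξ * (starRingEnd ℂ) (v ξ)) →
          u' =ᵐ[volume] u) := by
  obtain ⟨a, ha, c, hc, hro⟩ := hRO
  have h2π : (1:ℝ) ≤ 2 * Real.pi := by nlinarith [Real.pi_gt_three]
  set κ : ℝ := (2 * Real.pi) ^ (n:ℝ) with hκdef
  have hκ1 : 1 ≤ κ := Real.one_le_rpow h2π (Nat.cast_nonneg n)
  have hκpos : 0 < κ := lt_of_lt_of_le one_pos hκ1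
  refine ⟨max 1 κ, lt_of_lt_of_le one_pos (le_max_left _ _), ?_⟩
  intro ℓ M hadd hsmul hbound
  set ψ : ℝ → ℝ := fun t => (φ t)⁻¹ with hψdef
  have hψm : Measurable ψ := hmeas.inv
  have hψnn : ∀ t, 1 ≤ t → 0 ≤ ψ t := fun t ht => inv_nonneg.mpr (hpos t ht).le
  have hφnn : ∀ t, 1 ≤ t → 0 ≤ φ t := fun t ht => (hpos t ht).le
  have hWpos : ∀ ξ : EuclideanSpace ℝ (Fin n), 0 < φ (jb ξ) := fun ξ => hpos _ (one_le_jb ξ)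
  have hWne : ∀ ξ : EuclideanSpace ℝ (Fin n), (↑(φ (jb ξ)) : ℂ) ≠ 0 :=
    fun ξ => Complex.ofReal_ne_zero.mpr (hWpos ξ).ne'
  -- ℓ respects a.e. equality
  have hℓae : ∀ v v', memH n ψ v → memH n ψ v' → v =ᵐ[volume] v' → ℓ v = ℓ v' := by
    intro v v' hv hv' he
    have hd : memH n ψ (fun ξ => v' ξ - v ξ) := memH_sub hψm hv' hv
    have hd0 : (fun ξ => v' ξ - v ξ) =ᵐ[volume] 0 := by
      filter_upwards [he] with ξ h
      simp [h]
    have h1 : ℓ (v + fun ξ => v' ξ - v ξ) = ℓ v + ℓ (fun ξ => v' ξ - v ξ) := hadd _ _ hv hd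
    have h2 : (v + fun ξ => v' ξ - v ξ) = v' := by funext ξ; simp
    have h3 := hbound _ hd
    rw [wnormSq_zero_of_ae hd0] at h3
    simp only [ENNReal.toReal_zero, Real.sqrt_zero, mul_zero] at h3
    have h4 : ℓ (fun ξ => v' ξ - v ξ) = 0 := norm_le_zero_iff.mp h3
    rw [h2, h4, add_zero] at h1
    exact h1.symm
  -- M is nonnegative
  have hM : 0 ≤ M := by
    set r : ℝ := Real.sqrt ((a^2 - 1)/2) with hrdef
    have hr : 0 < r := Real.sqrt_pos.mpr (by nlinarith)
    set v₀ : EuclideanSpace ℝ (Fin n) → ℂ :=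
      (Metric.closedBall (0:EuclideanSpace ℝ (Fin n)) r).indicator (fun _ => (1:ℂ)) with hv₀def
    have hjba : ∀ ξ ∈ Metric.closedBall (0:EuclideanSpace ℝ (Fin n)) r, jb ξ ≤ a := by
      intro ξ hξ
      have hξr : ‖ξ‖ ≤ r := by simpa [Metric.mem_closedBall] using hξ
      have h1 : (1:ℝ) + ‖ξ‖^2 ≤ a^2 := by
        have : ‖ξ‖^2 ≤ r^2 := pow_le_pow_left₀ (norm_nonneg _) hξr 2
        have hrsq : r^2 = (a^2-1)/2 := Real.sq_sqrt (by nlinarith)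
        nlinarith
      calc jb ξ ≤ Real.sqrt (a^2) := Real.sqrt_le_sqrt h1
        _ = a := Real.sqrt_sq (by linarith)
    have hφlb : ∀ ξ ∈ Metric.closedBall (0:EuclideanSpace ℝ (Fin n)) r,
        c⁻¹ * φ 1 ≤ φ (jb ξ) ∧ φ (jb ξ) ≤ c * φ 1 := by
      intro ξ hξ
      have h := hro 1 le_rfl (jb ξ) ⟨one_le_jb ξ, hjba ξ hξ⟩
      rw [mul_one] at h
      have hφ1 : 0 < φ 1 := hpos 1 le_rfl
      constructor
      · have := (le_div_iff₀ hφ1).mp h.1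
        linarith
      · have := (div_le_iff₀ hφ1).mp h.2
        linarith
    have hv₀m : Measurable v₀ := measurable_const.indicator Metric.isClosed_closedBall.measurableSet
    have hφ1 : 0 < φ 1 := hpos 1 le_rfl
    have hcpos : 0 < c := lt_of_lt_of_le one_pos hc
    -- bounds on wnormSq
    have hub : wnormSq n ψ v₀ ≤ ENNReal.ofReal ((c⁻¹*φ 1)⁻¹^2) * volume (Metric.closedBall (0:EuclideanSpace ℝ (Fin n)) r) := by
      rw [← lintegral_indicator_const Metric.isClosed_closedBall.measurableSet]
      apply lintegral_mono
      intro ξ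
      by_cases hξ : ξ ∈ Metric.closedBall (0:EuclideanSpace ℝ (Fin n)) r
      · rw [Set.indicator_of_mem hξ]
        have hb := hφlb ξ hξ
        have h1 : ‖v₀ ξ‖ = 1 := by rw [hv₀def, Set.indicator_of_mem hξ]; simp
        dsimp only
        rw [h1]
        apply ENNReal.ofReal_le_ofReal
        rw [one_pow, mul_one]
        apply pow_le_pow_left₀ (hψnn _ (one_le_jb ξ))
        show (φ (jb ξ))⁻¹ ≤ (c⁻¹ * φ 1)⁻¹
        apply inv_anti₀ (by positivity) hb.1
      · rw [Set.indicator_of_notMem hξ]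
        have h1 : v₀ ξ = 0 := by rw [hv₀def, Set.indicator_of_notMem hξ]
        simp [h1]
    have hlb : ENNReal.ofReal ((c*φ 1)⁻¹^2) * volume (Metric.closedBall (0:EuclideanSpace ℝ (Fin n)) r) ≤ wnormSq n ψ v₀ := by
      rw [← lintegral_indicator_const Metric.isClosed_closedBall.measurableSet]
      apply lintegral_mono
      intro ξ
      by_cases hξ : ξ ∈ Metric.closedBall (0:EuclideanSpace ℝ (Fin n)) r
      · rw [Set.indicator_of_mem hξ]
        have hb := hφlb ξ hξ
        have h1 : ‖v₀ ξ‖ = 1 := by rw [hv₀def, Set.indicator_of_mem hξ]; simp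
        dsimp only
        rw [h1]
        apply ENNReal.ofReal_le_ofReal
        rw [one_pow, mul_one]
        apply pow_le_pow_left₀ (by positivity)
        show (c * φ 1)⁻¹ ≤ (φ (jb ξ))⁻¹
        apply inv_anti₀ (hWpos ξ) hb.2
      · rw [Set.indicator_of_notMem hξ]
        exact zero_le
    have hvol0 : 0 < volume (Metric.closedBall (0:EuclideanSpace ℝ (Fin n)) r) :=
      Metric.measure_closedBall_pos volume _ hr
    have hvolfin : volume (Metric.closedBall (0:EuclideanSpace ℝ (Fin n)) r) < ⊤ :=
      measure_closedBall_lt_top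
    have hfin : wnormSq n ψ v₀ < ⊤ :=
      lt_of_le_of_lt hub (ENNReal.mul_lt_top ENNReal.ofReal_lt_top hvolfin)
    have hposn : 0 < wnormSq n ψ v₀ := by
      refine lt_of_lt_of_le ?_ hlb
      apply ENNReal.mul_pos
      · simp only [ne_eq, ENNReal.ofReal_eq_zero, not_le]
        positivity
      · exact hvol0.ne'
    have hsq : 0 < Real.sqrt (wnormSq n ψ v₀).toReal := by
      apply Real.sqrt_pos.mpr
      exact ENNReal.toReal_pos hposn.ne' hfin.ne
    have hb := hbound v₀ ⟨hv₀m, hfin⟩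
    nlinarith [norm_nonneg (ℓ v₀)]
  -- the V map: function associated to an L² element
  classical
  have hVfm : ∀ f : Lp ℂ 2 (volume : Measure (EuclideanSpace ℝ (Fin n))),
      Measurable (fun ξ => (↑(φ (jb ξ)) : ℂ) * f ξ) := fun f =>
    (Complex.measurable_ofReal.comp (hmeas.comp measurable_jb)).mul (Lp.stronglyMeasurable f).measurable
  have hVwn : ∀ f : Lp ℂ 2 (volume : Measure (EuclideanSpace ℝ (Fin n))),
      wnormSq n ψ (fun ξ => (↑(φ (jb ξ)) : ℂ) * f ξ) = (eLpNorm (⇑f) 2 volume)^2 := by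
    intro f
    rw [sq_eLpNorm]
    apply lintegral_congr
    intro ξ
    have h0 := hWpos ξ
    have h1 : ‖(↑(φ (jb ξ)) : ℂ) * f ξ‖ = φ (jb ξ) * ‖f ξ‖ := by
      rw [norm_mul, Complex.norm_real, Real.norm_eq_abs, abs_of_nonneg h0.le]
    rw [h1, hψdef]
    dsimp only
    rw [show ((φ (jb ξ))⁻¹)^2 * (φ (jb ξ) * ‖f ξ‖)^2 = ‖f ξ‖^2 by field_simp,
      ofReal_norm_sq]
  have hVmem : ∀ f : Lp ℂ 2 (volume : Measure (EuclideanSpace ℝ (Fin n))),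
      memH n ψ (fun ξ => (↑(φ (jb ξ)) : ℂ) * f ξ) := by
    intro f
    refine ⟨hVfm f, ?_⟩
    rw [hVwn f]
    exact ENNReal.pow_lt_top (Lp.eLpNorm_lt_top f)
  have hVnorm : ∀ f : Lp ℂ 2 (volume : Measure (EuclideanSpace ℝ (Fin n))),
      Real.sqrt ((wnormSq n ψ (fun ξ => (↑(φ (jb ξ)) : ℂ) * f ξ)).toReal) = ‖f‖ := by
    intro f
    rw [hVwn f, sqrt_toReal_sq, Lp.norm_def]
  -- the linear functional on L²
  let L₀ : Lp ℂ 2 (volume : Measure (EuclideanSpace ℝ (Fin n))) →ₗ[ℂ] ℂ :=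
    { toFun := fun f => (starRingEnd ℂ) (ℓ (fun ξ => (↑(φ (jb ξ)) : ℂ) * f ξ))
      map_add' := by
        intro f g'
        have h1 : (fun ξ => (↑(φ (jb ξ)) : ℂ) * (⇑(f + g') ξ)) =ᵐ[volume]
            ((fun ξ => (↑(φ (jb ξ)) : ℂ) * f ξ) + (fun ξ => (↑(φ (jb ξ)) : ℂ) * g' ξ)) := by
          filter_upwards [Lp.coeFn_add f g'] with ξ h
          show (↑(φ (jb ξ)) : ℂ) * (⇑(f + g') ξ) = (↑(φ (jb ξ)) : ℂ) * f ξ + (↑(φ (jb ξ)) : ℂ) * g' ξ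
          rw [h, Pi.add_apply]
          ring
        have hmem2 : memH n ψ ((fun ξ => (↑(φ (jb ξ)) : ℂ) * f ξ) + (fun ξ => (↑(φ (jb ξ)) : ℂ) * g' ξ)) :=
          ⟨(hVfm f).add (hVfm g'), by rw [← wnormSq_congr_ae h1]; exact (hVmem (f+g')).2⟩
        have h2 := hℓae _ _ (hVmem (f+g')) hmem2 h1
        rw [h2, hadd _ _ (hVmem f) (hVmem g'), map_add]
      map_smul' := by
        intro m f
        have h1 : (fun ξ => (↑(φ (jb ξ)) : ℂ) * (⇑(m • f) ξ)) =ᵐ[volume]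
            (m • fun ξ => (↑(φ (jb ξ)) : ℂ) * f ξ) := by
          filter_upwards [Lp.coeFn_smul m f] with ξ h
          show (↑(φ (jb ξ)) : ℂ) * (⇑(m • f) ξ) = m * ((↑(φ (jb ξ)) : ℂ) * f ξ)
          rw [h, Pi.smul_apply, smul_eq_mul]
          ring
        have hmem2 : memH n ψ (m • fun ξ => (↑(φ (jb ξ)) : ℂ) * f ξ) :=
          ⟨(hVfm f).const_smul m, by rw [← wnormSq_congr_ae h1]; exact (hVmem (m • f)).2⟩
        have h2 := hℓae _ _ (hVmem (m • f)) hmem2 h1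
        rw [h2, hsmul m _ (hVmem f), map_mul, RingHom.id_apply, Complex.conj_conj, smul_eq_mul] }
  have hL₀b : ∀ f : Lp ℂ 2 (volume : Measure (EuclideanSpace ℝ (Fin n))), ‖L₀ f‖ ≤ M * ‖f‖ := by
    intro f
    have h := hbound _ (hVmem f)
    rw [hVnorm f] at h
    show ‖(starRingEnd ℂ) (ℓ (fun ξ => (↑(φ (jb ξ)) : ℂ) * f ξ))‖ ≤ M * ‖f‖
    rw [RCLike.norm_conj]
    exact h
  let L : Lp ℂ 2 (volume : Measure (EuclideanSpace ℝ (Fin n))) →L[ℂ] ℂ := L₀.mkContinuous M hL₀b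
  have hLnorm : ‖L‖ ≤ M := L₀.mkContinuous_norm_le hM hL₀b
  set g : Lp ℂ 2 (volume : Measure (EuclideanSpace ℝ (Fin n))) :=
    (InnerProductSpace.toDual ℂ _).symm L with hgdef
  have hgL : ∀ f, (inner ℂ g f : ℂ) = L f := fun f => InnerProductSpace.toDual_symm_apply
  have hgnorm : ‖g‖ ≤ M := by
    rw [hgdef, LinearIsometryEquiv.norm_map]
    exact hLnorm
  have hGm : Measurable (⇑g) := (Lp.stronglyMeasurable g).measurable
  set u : EuclideanSpace ℝ (Fin n) → ℂ := fun ξ => (↑(κ * (φ (jb ξ))⁻¹) : ℂ) * g ξ with hu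
  have hum : Measurable u :=
    (Complex.measurable_ofReal.comp (measurable_const.mul (hmeas.comp measurable_jb).inv)).mul hGm
  have hwu : wnormSq n φ u = ENNReal.ofReal (κ^2) * (eLpNorm (⇑g) 2 volume)^2 := by
    have hpt : ∀ ξ, ENNReal.ofReal (φ (jb ξ)^2 * ‖u ξ‖^2)
        = ENNReal.ofReal (κ^2) * (‖g ξ‖₊ : ℝ≥0∞)^2 := by
      intro ξ
      have h0 := hWpos ξ
      have h1 : ‖u ξ‖ = κ * (φ (jb ξ))⁻¹ * ‖g ξ‖ := by
        rw [hu]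
        dsimp only
        rw [norm_mul, Complex.norm_real, Real.norm_eq_abs, abs_of_nonneg (by positivity)]
      rw [h1, show φ (jb ξ)^2 * (κ * (φ (jb ξ))⁻¹ * ‖g ξ‖)^2 = κ^2 * ‖g ξ‖^2 by field_simp,
        ENNReal.ofReal_mul (sq_nonneg κ), ofReal_norm_sq]
    calc wnormSq n φ u = ∫⁻ ξ, ENNReal.ofReal (κ^2) * (‖g ξ‖₊ : ℝ≥0∞)^2 := lintegral_congr hpt
      _ = ENNReal.ofReal (κ^2) * ∫⁻ ξ, (‖g ξ‖₊ : ℝ≥0∞)^2 :=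
          lintegral_const_mul _ ((hGm.nnnorm.coe_nnreal_ennreal).pow_const 2)
      _ = _ := by rw [sq_eLpNorm]
  have hufin : wnormSq n φ u < ⊤ := by
    rw [hwu]
    exact ENNReal.mul_lt_top ENNReal.ofReal_lt_top (ENNReal.pow_lt_top (Lp.eLpNorm_lt_top g))
  have hsqrtu : Real.sqrt ((wnormSq n φ u).toReal) = κ * ‖g‖ := by
    rw [hwu, ENNReal.toReal_mul, ENNReal.toReal_ofReal (sq_nonneg κ), ENNReal.toReal_pow,
      ← Lp.norm_def, show κ^2 * ‖g‖^2 = (κ * ‖g‖)^2 by ring, Real.sqrt_sq (by positivity)]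
  -- key representation
  have key : ∀ v, memH n ψ v → (ℓ v = (↑((2*Real.pi)^(-(n:ℝ))) : ℂ) * ∫ ξ, u ξ * (starRingEnd ℂ) (v ξ))
      ∧ ‖ℓ v‖ ≤ ‖g‖ * Real.sqrt (wnormSq n ψ v).toReal := by
    intro v hv
    set f₀ : EuclideanSpace ℝ (Fin n) → ℂ := fun ξ => (↑(ψ (jb ξ)) : ℂ) * v ξ with hf₀
    have hf₀mem : MemLp f₀ 2 volume := memℒp_two hψm hψnn hv.1 hv.2
    set fL := hf₀mem.toLp f₀ with hfL
    have hae1 : ⇑fL =ᵐ[volume] f₀ := hf₀mem.coeFn_toLp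
    have hVeq : (fun ξ => (↑(φ (jb ξ)) : ℂ) * fL ξ) =ᵐ[volume] v := by
      filter_upwards [hae1] with ξ h
      show (↑(φ (jb ξ)) : ℂ) * fL ξ = v ξ
      rw [h, hf₀]
      dsimp only
      rw [hψdef]
      dsimp only
      rw [← mul_assoc, Complex.ofReal_inv, mul_inv_cancel₀ (hWne ξ), one_mul]
    have hℓveq : ℓ v = ℓ (fun ξ => (↑(φ (jb ξ)) : ℂ) * fL ξ) := (hℓae _ _ (hVmem fL) hv hVeq).symm
    have hLf : L fL = (starRingEnd ℂ) (ℓ (fun ξ => (↑(φ (jb ξ)) : ℂ) * fL ξ)) := rfl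
    have hℓform : ℓ v = (starRingEnd ℂ) (inner ℂ g fL : ℂ) := by
      rw [hℓveq, hgL fL, hLf, Complex.conj_conj]
    have hfLnorm : ‖fL‖ = Real.sqrt (wnormSq n ψ v).toReal := by
      rw [hfL, Lp.norm_toLp,
        show wnormSq n ψ v = (eLpNorm f₀ 2 volume)^2 from by
          rw [sq_eLpNorm]; exact wnormSq_eq ψ hψnn v,
        sqrt_toReal_sq]
    have hinner : (inner ℂ g fL : ℂ) = ∫ ξ, (starRingEnd ℂ) (g ξ) * fL ξ := by
      rw [L2.inner_def]
      simp_rw [RCLike.inner_apply']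
    refine ⟨?_, ?_⟩
    · have hstep2 : ℓ v = ∫ ξ, (↑((φ (jb ξ))⁻¹) : ℂ) * g ξ * (starRingEnd ℂ) (v ξ) := by
        rw [hℓform, hinner, ← integral_conj]
        apply integral_congr_ae
        filter_upwards [hae1] with ξ h
        rw [map_mul, Complex.conj_conj, h, hf₀]
        dsimp only
        rw [map_mul, Complex.conj_ofReal, hψdef]
        dsimp only
        ring
      have hstep1 : ∫ ξ, u ξ * (starRingEnd ℂ) (v ξ)
          = (↑κ : ℂ) * ∫ ξ, (↑((φ (jb ξ))⁻¹) : ℂ) * g ξ * (starRingEnd ℂ) (v ξ) := by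
        rw [← integral_const_mul]
        apply integral_congr_ae
        apply Filter.Eventually.of_forall
        intro ξ
        rw [hu]
        dsimp only
        rw [Complex.ofReal_mul]
        ring
      rw [hstep2, hstep1, ← mul_assoc,
        show ((↑((2*Real.pi)^(-(n:ℝ))) : ℂ) * (↑κ : ℂ)) = 1 by
          rw [← Complex.ofReal_mul, hκdef, ← Real.rpow_add (by positivity)]
          simp,
        one_mul]
    · rw [hℓform, RCLike.norm_conj, ← hfLnorm]
      exact norm_inner_le_norm g fL
  refine ⟨u, ⟨hum, hufin⟩, fun v hv => (key v hv).1, ?_, ?_, ?_⟩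
  · rw [hsqrtu]
    calc κ * ‖g‖ ≤ κ * M := mul_le_mul_of_nonneg_left hgnorm hκpos.le
      _ ≤ max 1 κ * M := mul_le_mul_of_nonneg_right (le_max_right 1 κ) hM
  · intro v hv
    have h := (key v hv).2
    have hgle : ‖g‖ ≤ Real.sqrt (wnormSq n φ u).toReal := by
      rw [hsqrtu]
      nlinarith [norm_nonneg g]
    have h1 : (1:ℝ) ≤ max 1 κ := le_max_left _ _
    have hs1 := Real.sqrt_nonneg (wnormSq n φ u).toReal
    have hs2 := Real.sqrt_nonneg (wnormSq n ψ v).toReal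
    calc ‖ℓ v‖ ≤ ‖g‖ * Real.sqrt (wnormSq n ψ v).toReal := h
      _ ≤ Real.sqrt (wnormSq n φ u).toReal * Real.sqrt (wnormSq n ψ v).toReal :=
          mul_le_mul_of_nonneg_right hgle hs2
      _ = 1 * Real.sqrt (wnormSq n φ u).toReal * Real.sqrt (wnormSq n ψ v).toReal := by ring
      _ ≤ max 1 κ * Real.sqrt (wnormSq n φ u).toReal * Real.sqrt (wnormSq n ψ v).toReal :=
          mul_le_mul_of_nonneg_right (mul_le_mul_of_nonneg_right h1 hs1) hs2
  · -- uniqueness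
    intro u' hu' hrep'
    set d : EuclideanSpace ℝ (Fin n) → ℂ := fun ξ => u' ξ - u ξ with hd
    have hdmem : memH n φ d := memH_sub hmeas hu' ⟨hum, hufin⟩
    set vst : EuclideanSpace ℝ (Fin n) → ℂ := fun ξ => (↑(φ (jb ξ)^2) : ℂ) * d ξ with hvst
    have hvstm : Measurable vst :=
      (Complex.measurable_ofReal.comp ((hmeas.comp measurable_jb).pow_const 2)).mul hdmem.1
    have hvstwn : wnormSq n ψ vst = wnormSq n φ d := by
      apply lintegral_congr
      intro ξ
      congr 1
      have h0 := hWpos ξ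
      have h1 : ‖vst ξ‖ = φ (jb ξ)^2 * ‖d ξ‖ := by
        rw [hvst]
        dsimp only
        rw [norm_mul, Complex.norm_real, Real.norm_eq_abs, abs_of_nonneg (by positivity)]
      rw [h1, hψdef]
      dsimp only
      field_simp
    have hvstmem : memH n ψ vst := ⟨hvstm, by rw [hvstwn]; exact hdmem.2⟩
    have hPmem : ∀ (p : EuclideanSpace ℝ (Fin n) → ℂ), memH n φ p →
        MemLp (fun ξ => (↑(φ (jb ξ)) : ℂ) * (starRingEnd ℂ) (p ξ)) 2 volume := by
      intro p hp
      exact memℒp_two hmeas hφnn (continuous_star.measurable.comp hp.1)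
        (by rw [wnormSq_conj]; exact hp.2)
    have hQmem : MemLp (fun ξ => (↑(φ (jb ξ)) : ℂ) * d ξ) 2 volume :=
      memℒp_two hmeas hφnn hdmem.1 hdmem.2
    have hInt : ∀ (p : EuclideanSpace ℝ (Fin n) → ℂ), memH n φ p →
        Integrable (fun ξ => p ξ * (starRingEnd ℂ) (vst ξ)) volume := by
      intro p hp
      have h := integrable_conj_mul (hPmem p hp) (hPmem d hdmem)
      refine h.congr (Filter.Eventually.of_forall fun ξ => ?_)
      show (starRingEnd ℂ) ((↑(φ (jb ξ)) : ℂ) * (starRingEnd ℂ) (p ξ)) *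
            ((↑(φ (jb ξ)) : ℂ) * (starRingEnd ℂ) (d ξ))
          = p ξ * (starRingEnd ℂ) (vst ξ)
      rw [hvst]
      dsimp only
      rw [map_mul, map_mul, Complex.conj_conj, Complex.conj_ofReal, Complex.conj_ofReal]
      push_cast
      ring
    have heq1 := (key vst hvstmem).1
    have heq2 := hrep' vst hvstmem
    have hne : (↑((2*Real.pi)^(-(n:ℝ))) : ℂ) ≠ 0 := by
      apply Complex.ofReal_ne_zero.mpr
      exact (Real.rpow_pos_of_pos (by positivity) _).ne'
    have hieq : ∫ ξ, u' ξ * (starRingEnd ℂ) (vst ξ) = ∫ ξ, u ξ * (starRingEnd ℂ) (vst ξ) :=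
      mul_left_cancel₀ hne (heq2.symm.trans heq1)
    have hsub : (fun ξ => d ξ * (starRingEnd ℂ) (vst ξ)) =
        fun ξ => u' ξ * (starRingEnd ℂ) (vst ξ) - u ξ * (starRingEnd ℂ) (vst ξ) := by
      funext ξ
      rw [hd]
      ring
    have hzero : ∫ ξ, d ξ * (starRingEnd ℂ) (vst ξ) = 0 := by
      rw [hsub, integral_sub (hInt u' hu') (hInt u ⟨hum, hufin⟩), hieq, sub_self]
    set F : EuclideanSpace ℝ (Fin n) → ℝ := fun ξ => φ (jb ξ)^2 * ‖d ξ‖^2 with hF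
    have hptF : ∀ ξ, d ξ * (starRingEnd ℂ) (vst ξ) = (↑(F ξ) : ℂ) := by
      intro ξ
      rw [hvst, hF]
      dsimp only
      rw [map_mul, Complex.conj_ofReal,
        show d ξ * ((↑(φ (jb ξ)^2) : ℂ) * (starRingEnd ℂ) (d ξ))
          = (↑(φ (jb ξ)^2) : ℂ) * (d ξ * (starRingEnd ℂ) (d ξ)) from by ring,
        Complex.mul_conj]
      push_cast [Complex.normSq_eq_norm_sq]
      ring
    have hIc : Integrable (fun ξ => d ξ * (starRingEnd ℂ) (vst ξ)) volume := by
      rw [hsub]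
      exact (hInt u' hu').sub (hInt u ⟨hum, hufin⟩)
    have hFeq : F = fun ξ => (d ξ * (starRingEnd ℂ) (vst ξ)).re := by
      funext ξ
      rw [hptF ξ, Complex.ofReal_re]
    have hintF : Integrable F volume := by
      rw [hFeq]
      exact hIc.re
    have hFint0 : ∫ ξ, F ξ = 0 := by
      have h2 := integral_re hIc
      rw [hzero] at h2
      simp only [Complex.zero_re, map_zero] at h2
      rw [hFeq]
      exact h2
    have hF0 : F =ᵐ[volume] 0 := by
      have hnn : (0:EuclideanSpace ℝ (Fin n) → ℝ) ≤ F := by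
        intro ξ
        rw [hF]
        positivity
      exact (integral_eq_zero_iff_of_nonneg hnn hintF).mp hFint0
    filter_upwards [hF0] with ξ h
    have h0 := hWpos ξ
    have hFξ : φ (jb ξ)^2 * ‖d ξ‖^2 = 0 := h
    have h2 : ‖d ξ‖^2 = 0 := by
      have hφ2 : φ (jb ξ)^2 ≠ 0 := by positivity
      exact (mul_eq_zero.mp hFξ).resolve_left hφ2
    have h3 : d ξ = 0 := by
      rwa [pow_eq_zero_iff two_ne_zero, norm_eq_zero] at h2
    rw [hd] at h3
    dsimp only at h3
    exact sub_eq_zero.mp h3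
end

section
/- Let ψ ∈ 𝓑 and suppose ψ is pseudoconcave in a neighborhood of infinity, i.e., there is a concave function ψ₁ : (c,∞) → (0,∞) with ψ/ψ₁ and ψ₁/ψ bounded on (c,∞). Then for fixed s₀ < s₁, the function φ(t) := t^{s₀} ψ(t^{s₁−s₀}) (t ≥ 1) satisfies the RO condition: there is c' ≥ 1 with c'⁻¹ λ^{s₀} ≤ φ(λt)/φ(t) ≤ c' λ^{s₁} for all t ≥ 1, λ ≥ 1. -/
set_option maxHeartbeats 1000000 in
/-- If ψ ∈ 𝓑 is pseudoconcave in a neighborhood of infinity (there is a positive concave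
ψ₁ on (c,∞) with ψ/ψ₁ and ψ₁/ψ bounded there), then for s₀ < s₁ the function
φ(t) = t^{s₀} ψ(t^{s₁-s₀}) satisfies the RO condition
c'⁻¹ λ^{s₀} ≤ φ(λt)/φ(t) ≤ c' λ^{s₁} for all t ≥ 1, λ ≥ 1, for some c' ≥ 1. -/
theorem stmt19 (ψ ψ₁ : ℝ → ℝ) (s₀ s₁ : ℝ) (hs : s₀ < s₁)
    (hmeas : Measurable ψ)
    (hψpos : ∀ t > (0:ℝ), 0 < ψ t)
    (hψbd : ∀ a b : ℝ, 0 < a → a < b → ∃ M : ℝ, ∀ τ ∈ Set.Icc a b, ψ τ ≤ M)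
    (hψinv : ∀ c > (0:ℝ), ∃ M : ℝ, ∀ τ > c, (ψ τ)⁻¹ ≤ M)
    (c : ℝ) (hc : 1 < c)
    (hconc : ConcaveOn ℝ (Set.Ioi c) ψ₁)
    (hψ₁pos : ∀ τ > c, 0 < ψ₁ τ)
    (hquot : ∃ K : ℝ, ∀ τ > c, ψ τ / ψ₁ τ ≤ K ∧ ψ₁ τ / ψ τ ≤ K) :
    ∃ c' ≥ (1:ℝ), ∀ t ≥ (1:ℝ), ∀ l ≥ (1:ℝ),
      c'⁻¹ * l ^ s₀ ≤
        ((l * t) ^ s₀ * ψ ((l * t) ^ (s₁ - s₀))) / (t ^ s₀ * ψ (t ^ (s₁ - s₀))) ∧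
      ((l * t) ^ s₀ * ψ ((l * t) ^ (s₁ - s₀))) / (t ^ s₀ * ψ (t ^ (s₁ - s₀))) ≤
        c' * l ^ s₁ := by
  have hσ : (0:ℝ) < s₁ - s₀ := sub_pos.2 hs
  set σ := s₁ - s₀ with hσdef
  -- basic constants
  obtain ⟨M₀, hM₀⟩ := hψinv (1/2) (by norm_num)
  have hM₀pos : 0 < M₀ :=
    lt_of_lt_of_le (inv_pos.2 (hψpos 1 one_pos)) (hM₀ 1 (by norm_num))
  set m : ℝ := M₀⁻¹ with hmdef
  have hm : 0 < m := inv_pos.2 hM₀pos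
  have hlow : ∀ τ : ℝ, 1 ≤ τ → m ≤ ψ τ := by
    intro τ hτ
    have h2 : 0 < ψ τ := hψpos τ (by linarith)
    exact inv_le_of_inv_le₀ h2 (hM₀ τ (by linarith))
  obtain ⟨M₁, hM₁⟩ := hψbd 1 (c+1) one_pos (by linarith)
  have hM₁pos : 0 < M₁ :=
    lt_of_lt_of_le (hψpos 1 one_pos) (hM₁ 1 ⟨le_refl 1, by linarith⟩)
  obtain ⟨K', hK'⟩ := hquot
  set K : ℝ := max K' 1 with hKdef
  have hK1 : (1:ℝ) ≤ K := le_max_right _ _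
  have hK0 : (0:ℝ) ≤ K := by linarith
  have hKub : ∀ τ > c, ψ τ ≤ K * ψ₁ τ := by
    intro τ hτ
    have hp := hψ₁pos τ hτ
    have h := (hK' τ hτ).1
    rw [div_le_iff₀ hp] at h
    calc ψ τ ≤ K' * ψ₁ τ := h
      _ ≤ K * ψ₁ τ := mul_le_mul_of_nonneg_right (le_max_left _ _) hp.le
  have hKlb : ∀ τ > c, ψ₁ τ ≤ K * ψ τ := by
    intro τ hτ
    have hp := hψpos τ (by linarith)
    have h := (hK' τ hτ).2
    rw [div_le_iff₀ hp] at h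
    calc ψ₁ τ ≤ K' * ψ τ := h
      _ ≤ K * ψ τ := mul_le_mul_of_nonneg_right (le_max_left _ _) hp.le
  -- concavity lemmas
  have lem2 : ∀ p a x : ℝ, c < p → p < a → a ≤ x → ψ₁ x ≤ ((x - p)/(a - p)) * ψ₁ a := by
    intro p a x hp ha hax
    have hxp : 0 < x - p := by linarith
    have hap : 0 < a - p := by linarith
    set θ := (a - p)/(x - p) with hθdef
    have hθpos : 0 < θ := div_pos hap hxp
    have hθ1 : θ ≤ 1 := by rw [hθdef, div_le_one hxp]; linarith
    have hcomb : (1 - θ) • p + θ • x = a := by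
      simp only [smul_eq_mul]
      have : θ * (x - p) = a - p := by rw [hθdef]; field_simp
      nlinarith [this]
    have hkey := hconc.2 (Set.mem_Ioi.mpr hp) (Set.mem_Ioi.mpr (by linarith : c < x))
      (by linarith : (0:ℝ) ≤ 1 - θ) hθpos.le (by ring)
    rw [hcomb] at hkey
    have hppos : 0 < ψ₁ p := hψ₁pos p hp
    simp only [smul_eq_mul] at hkey
    -- hkey : (1-θ) * ψ₁ p + θ * ψ₁ x ≤ ψ₁ a
    have h2 : θ * ψ₁ x ≤ ψ₁ a := by nlinarith
    rw [hθdef] at h2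
    rw [div_mul_eq_mul_div, div_le_iff₀ hxp] at h2
    rw [div_mul_eq_mul_div, le_div_iff₀ hap]
    nlinarith [h2]
  have lemMono : ∀ u v : ℝ, c < u → u ≤ v → ψ₁ u ≤ 2 * ψ₁ v := by
    intro u v hu huv
    have hw : c < 2*v - u := by linarith
    have hkey := hconc.2 (Set.mem_Ioi.mpr hu) (Set.mem_Ioi.mpr hw)
      (by norm_num : (0:ℝ) ≤ 1/2) (by norm_num : (0:ℝ) ≤ 1/2) (by norm_num)
    have hcomb : (1/2 : ℝ) • u + (1/2 : ℝ) • (2*v - u) = v := by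
      simp only [smul_eq_mul]; ring
    rw [hcomb] at hkey
    simp only [smul_eq_mul] at hkey
    have := hψ₁pos _ hw
    linarith
  -- main constant
  set C : ℝ := (2*(c+1)*K*K*M₁ + M₁)/m + 2*(c+1)*K*K + 2*K*K with hCdef
  have hKK : (1:ℝ) ≤ K*K := by nlinarith
  have hP1 : (0:ℝ) ≤ 2*(c+1)*K*K := by nlinarith
  have hP1' : (0:ℝ) ≤ 2*(c+1)*K*K*M₁ := by nlinarith
  have hP2 : (0:ℝ) ≤ 2*K*K := by nlinarith
  have hDiv0 : (0:ℝ) ≤ (2*(c+1)*K*K*M₁ + M₁)/m := div_nonneg (by nlinarith) hm.le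
  have hC1 : M₁/m ≤ C := by
    have : M₁/m ≤ (2*(c+1)*K*K*M₁ + M₁)/m :=
      div_le_div_of_nonneg_right (by nlinarith) hm.le
    linarith
  have hC2 : (2*(c+1)*K*K*M₁)/m ≤ C := by
    have : (2*(c+1)*K*K*M₁)/m ≤ (2*(c+1)*K*K*M₁ + M₁)/m :=
      div_le_div_of_nonneg_right (by nlinarith) hm.le
    linarith
  have hC3 : 2*(c+1)*K*K ≤ C := by rw [hCdef]; linarith
  have hC4 : 2*K*K ≤ C := by rw [hCdef]; linarith
  have hCge1 : (1:ℝ) ≤ C := by rw [hCdef]; linarith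
  have hCpos : (0:ℝ) < C := by linarith
  clear_value m K C
  clear hCdef hmdef hKdef hM₀ hK'
  -- helper
  have helper : ∀ B x y μ : ℝ, 0 ≤ B → x ≤ B → m ≤ y → 1 ≤ μ → x ≤ (B/m) * (μ * y) := by
    intro B x y μ hB hx hy hμ
    have hBm : 0 ≤ B/m := div_nonneg hB hm.le
    calc x ≤ B := hx
      _ = (B/m) * m := (div_mul_cancel₀ _ hm.ne').symm
      _ ≤ (B/m) * y := mul_le_mul_of_nonneg_left hy hBm
      _ ≤ (B/m) * (μ * y) := by
          have : y ≤ μ * y := le_mul_of_one_le_left (by linarith) hμ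
          exact mul_le_mul_of_nonneg_left this hBm
  -- the key estimate
  have key : ∀ τ : ℝ, 1 ≤ τ → ∀ μ : ℝ, 1 ≤ μ →
      ψ (μ * τ) ≤ C * μ * ψ τ ∧ ψ τ ≤ C * ψ (μ * τ) := by
    intro τ hτ μ hμ
    have hτ0 : (0:ℝ) < τ := by linarith
    have hμτge : τ ≤ μ * τ := le_mul_of_one_le_left hτ0.le hμ
    have hμτ1 : (1:ℝ) ≤ μ * τ := le_trans hτ hμτge
    have hψτ : 0 < ψ τ := hψpos τ hτ0
    have hψμτ : 0 < ψ (μ * τ) := hψpos _ (by linarith)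
    have hμ0 : (0:ℝ) ≤ μ := by linarith
    constructor
    · -- upper bound
      by_cases h1 : μ * τ ≤ c + 1
      · -- both in compact range
        have hub := hM₁ (μ*τ) ⟨hμτ1, h1⟩
        have hlb := hlow τ hτ
        have := helper M₁ (ψ (μ*τ)) (ψ τ) μ hM₁pos.le hub hlb hμ
        calc ψ (μ*τ) ≤ (M₁/m) * (μ * ψ τ) := this
          _ ≤ C * (μ * ψ τ) :=
            mul_le_mul_of_nonneg_right hC1 (mul_nonneg hμ0 hψτ.le)
          _ = C * μ * ψ τ := by ring
      · push_neg at h1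
        by_cases h2 : c + 1 ≤ τ
        · -- far range, use concavity relative to τ
          have hpc : c < c + 1/2 := by linarith
          have hx := lem2 (c+1/2) τ (μ*τ) hpc (by linarith) hμτge
          have hub := hKub (μ*τ) (by linarith)
          have hlb := hKlb τ (by linarith)
          set R := (μ*τ - (c+1/2))/(τ - (c+1/2)) with hRdef
          have hτp : 0 < τ - (c+1/2) := by linarith
          have hR0 : 0 ≤ R := div_nonneg (by linarith) hτp.le
          have hR : R ≤ 2*(c+1)*μ := by
            rw [hRdef, div_le_iff₀ hτp]
            nlinarith [mul_nonneg (mul_nonneg hμ0 (by linarith : (0:ℝ) ≤ 2*c+1))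
              (by linarith : (0:ℝ) ≤ τ - (c+1))]
          have hψ₁τ : 0 < ψ₁ τ := hψ₁pos τ (by linarith)
          have s1 : ψ (μ*τ) ≤ K * (R * ψ₁ τ) :=
            hub.trans (mul_le_mul_of_nonneg_left hx hK0)
          have s2 : K * (R * ψ₁ τ) ≤ K * (R * (K * ψ τ)) :=
            mul_le_mul_of_nonneg_left (mul_le_mul_of_nonneg_left hlb hR0) hK0
          have s3 : K * (R * (K * ψ τ)) ≤ K * ((2*(c+1)*μ) * (K * ψ τ)) :=
            mul_le_mul_of_nonneg_left
              (mul_le_mul_of_nonneg_right hR (mul_nonneg hK0 hψτ.le)) hK0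
          have s4 : K * ((2*(c+1)*μ) * (K * ψ τ)) = (2*(c+1)*K*K) * (μ * ψ τ) := by ring
          have s5 : (2*(c+1)*K*K) * (μ * ψ τ) ≤ C * (μ * ψ τ) :=
            mul_le_mul_of_nonneg_right hC3 (mul_nonneg hμ0 hψτ.le)
          calc ψ (μ*τ) ≤ (2*(c+1)*K*K) * (μ * ψ τ) := by linarith
            _ ≤ C * (μ * ψ τ) := s5
            _ = C * μ * ψ τ := by ring
        · -- τ small, μτ large
          push_neg at h2
          have hpc : c < c + 1/2 := by linarith
          have hub := hKub (μ*τ) (by linarith)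
          have hx := lem2 (c+1/2) (c+1) (μ*τ) hpc (by linarith) (by linarith)
          have heq : ((μ*τ) - (c+1/2))/((c+1) - (c+1/2)) = 2*(μ*τ) - 2*c - 1 := by
            rw [show ((c+1:ℝ) - (c+1/2)) = 1/2 by ring,
              div_eq_iff (by norm_num : (1/2:ℝ) ≠ 0)]
            ring
          rw [heq] at hx
          have hlbc := hKlb (c+1) (by linarith)
          have hMc := hM₁ (c+1) ⟨by linarith, le_refl _⟩
          have hψ₁c : 0 < ψ₁ (c+1) := hψ₁pos _ (by linarith)
          have hcoef0 : 0 ≤ 2*(μ*τ) - 2*c - 1 := by linarith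
          have hcoef : 2*(μ*τ) - 2*c - 1 ≤ 2*(c+1)*μ := by nlinarith
          have s1 : ψ (μ*τ) ≤ K * ((2*(μ*τ) - 2*c - 1) * ψ₁ (c+1)) :=
            hub.trans (mul_le_mul_of_nonneg_left hx hK0)
          have s2 : K * ((2*(μ*τ) - 2*c - 1) * ψ₁ (c+1))
              ≤ K * ((2*(μ*τ) - 2*c - 1) * (K * ψ (c+1))) :=
            mul_le_mul_of_nonneg_left (mul_le_mul_of_nonneg_left hlbc hcoef0) hK0
          have hψc : 0 < ψ (c+1) := hψpos _ (by linarith)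
          have s3 : K * ((2*(μ*τ) - 2*c - 1) * (K * ψ (c+1)))
              ≤ K * ((2*(c+1)*μ) * (K * M₁)) := by
            apply mul_le_mul_of_nonneg_left _ hK0
            apply mul_le_mul hcoef (mul_le_mul_of_nonneg_left hMc hK0)
              (mul_nonneg hK0 hψc.le) (by nlinarith)
          have s4 : K * ((2*(c+1)*μ) * (K * M₁)) = (2*(c+1)*K*K*M₁) * μ := by ring
          have hbig : ψ (μ*τ) ≤ (2*(c+1)*K*K*M₁) * μ := by linarith
          have hlb := hlow τ hτ
          have : ψ (μ*τ) ≤ ((2*(c+1)*K*K*M₁ * μ)/m) * (1 * ψ τ) :=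
            helper (2*(c+1)*K*K*M₁ * μ) (ψ (μ*τ)) (ψ τ) 1
              (by nlinarith) hbig hlb le_rfl
          have hdiv : ((2*(c+1)*K*K*M₁ * μ)/m) = ((2*(c+1)*K*K*M₁)/m) * μ := by
            ring
          calc ψ (μ*τ) ≤ ((2*(c+1)*K*K*M₁)/m) * μ * (1 * ψ τ) := by
                rw [← hdiv]; exact this
            _ = ((2*(c+1)*K*K*M₁)/m) * (μ * ψ τ) := by ring
            _ ≤ C * (μ * ψ τ) :=
              mul_le_mul_of_nonneg_right hC2 (mul_nonneg hμ0 hψτ.le)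
            _ = C * μ * ψ τ := by ring
    · -- lower bound
      by_cases h2 : τ ≤ c + 1
      · have hub := hM₁ τ ⟨hτ, h2⟩
        have hlb := hlow (μ*τ) hμτ1
        have := helper M₁ (ψ τ) (ψ (μ*τ)) 1 hM₁pos.le hub hlb le_rfl
        calc ψ τ ≤ (M₁/m) * (1 * ψ (μ*τ)) := this
          _ = (M₁/m) * ψ (μ*τ) := by ring
          _ ≤ C * ψ (μ*τ) := mul_le_mul_of_nonneg_right hC1 hψμτ.le
      · push_neg at h2
        have hub := hKub τ (by linarith)
        have hmono := lemMono τ (μ*τ) (by linarith) hμτge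
        have hlb := hKlb (μ*τ) (by linarith)
        have hψ₁μτ : 0 < ψ₁ (μ*τ) := hψ₁pos _ (by linarith)
        have s1 : ψ τ ≤ K * (2 * ψ₁ (μ*τ)) :=
          hub.trans (mul_le_mul_of_nonneg_left hmono hK0)
        have s2 : K * (2 * ψ₁ (μ*τ)) ≤ K * (2 * (K * ψ (μ*τ))) :=
          mul_le_mul_of_nonneg_left
            (mul_le_mul_of_nonneg_left hlb (by norm_num)) hK0
        have s3 : K * (2 * (K * ψ (μ*τ))) = (2*K*K) * ψ (μ*τ) := by ring
        have s4 : (2*K*K) * ψ (μ*τ) ≤ C * ψ (μ*τ) :=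
          mul_le_mul_of_nonneg_right hC4 hψμτ.le
        linarith
  -- conclude
  refine ⟨C, hCge1, ?_⟩
  intro t ht l hl
  have ht0 : (0:ℝ) < t := by linarith
  have hl0 : (0:ℝ) < l := by linarith
  have hτ1 : (1:ℝ) ≤ t ^ σ := by
    calc (1:ℝ) = 1 ^ σ := (Real.one_rpow σ).symm
      _ ≤ t ^ σ := Real.rpow_le_rpow zero_le_one ht hσ.le
  have hμ1 : (1:ℝ) ≤ l ^ σ := by
    calc (1:ℝ) = 1 ^ σ := (Real.one_rpow σ).symm
      _ ≤ l ^ σ := Real.rpow_le_rpow zero_le_one hl hσ.le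
  have hmul : (l*t) ^ σ = l ^ σ * t ^ σ := Real.mul_rpow hl0.le ht0.le
  have hmuls0 : (l*t) ^ s₀ = l ^ s₀ * t ^ s₀ := Real.mul_rpow hl0.le ht0.le
  have hts0 : (0:ℝ) < t ^ s₀ := Real.rpow_pos_of_pos ht0 _
  have hls0 : (0:ℝ) < l ^ s₀ := Real.rpow_pos_of_pos hl0 _
  have hψτ : 0 < ψ (t ^ σ) := hψpos _ (by linarith)
  obtain ⟨hU, hL⟩ := key (t ^ σ) hτ1 (l ^ σ) hμ1
  have hψμτ : 0 < ψ (l ^ σ * t ^ σ) := hψpos _ (by nlinarith)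
  have hratio : ((l*t) ^ s₀ * ψ ((l*t) ^ σ)) / (t ^ s₀ * ψ (t ^ σ))
      = l ^ s₀ * (ψ (l ^ σ * t ^ σ) / ψ (t ^ σ)) := by
    rw [hmuls0, hmul]
    field_simp
  have hpow : l ^ s₀ * l ^ σ = l ^ s₁ := by
    rw [← Real.rpow_add hl0, show s₀ + σ = s₁ by rw [hσdef]; ring]
  rw [hratio]
  constructor
  · have hdiv : C⁻¹ ≤ ψ (l ^ σ * t ^ σ) / ψ (t ^ σ) := by
      rw [le_div_iff₀ hψτ]
      have : C⁻¹ * ψ (t ^ σ) ≤ C⁻¹ * (C * ψ (l ^ σ * t ^ σ)) :=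
        mul_le_mul_of_nonneg_left hL (inv_nonneg.2 hCpos.le)
      calc C⁻¹ * ψ (t ^ σ) ≤ C⁻¹ * (C * ψ (l ^ σ * t ^ σ)) := this
        _ = (C⁻¹ * C) * ψ (l ^ σ * t ^ σ) := by ring
        _ = ψ (l ^ σ * t ^ σ) := by rw [inv_mul_cancel₀ hCpos.ne']; ring
    calc C⁻¹ * l ^ s₀ = l ^ s₀ * C⁻¹ := by ring
      _ ≤ l ^ s₀ * (ψ (l ^ σ * t ^ σ) / ψ (t ^ σ)) :=
        mul_le_mul_of_nonneg_left hdiv hls0.le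
  · have hdiv : ψ (l ^ σ * t ^ σ) / ψ (t ^ σ) ≤ C * l ^ σ := by
      rw [div_le_iff₀ hψτ]
      linarith
    calc l ^ s₀ * (ψ (l ^ σ * t ^ σ) / ψ (t ^ σ)) ≤ l ^ s₀ * (C * l ^ σ) :=
        mul_le_mul_of_nonneg_left hdiv hls0.le
      _ = C * (l ^ s₀ * l ^ σ) := by ring
      _ = C * l ^ s₁ := by rw [hpow]
end
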